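/- arXiv:math/0207024 — 6 statements merged into one kernel-verified Lean document; each statement's English description precedes it below -/
import Mathlib

section
/- Let λ ∈ ℤⁿ₊. Then the largest p ∈ ℕ for which there exist indices 1 ≤ r_1 < r_2 < … < r_p < s_p < s_{p−1} < … < s_1 ≤ n with λ_{r_q} + λ_{s_q} = 0 for all q = 1,…,p is equal to ⌊#λ/2⌋ (for p = 0 the condition is vacuous). -/
/-- `cnt l m` is the number of indices `r` with `l r = m`. -/
def cnt {n : ℕ} (l : Fin n → ℤ) (m : ℤ) : ℕ :=
  (Finset.univ.filter fun r => l r = m).card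

/-- The degree of atypicality `#λ = n − Σ_{m ≥ 1} |c_m(λ) − c_{−m}(λ)|`.
The sum over `m ≥ 1` is truncated at `max_r |λ_r|`; all later terms vanish,
so this truncated sum equals the full (finite) sum. -/
def atyp {n : ℕ} (l : Fin n → ℤ) : ℕ :=
  n - ∑ m ∈ Finset.Icc 1 (Finset.univ.sup fun r => (l r).natAbs),
        ((cnt l (m : ℤ) : ℤ) - (cnt l (-(m : ℤ)) : ℤ)).natAbs

/-- `λ ∈ ℤⁿ₊`: weakly decreasing, and any repeated value is zero
(equivalently, adjacent equal entries are zero). -/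
def ZPlus {n : ℕ} (l : Fin n → ℤ) : Prop :=
  Antitone l ∧ ∀ r s : Fin n, r < s → l r = l s → l r = 0

open Finset

/-- Indices of positive entries whose negative also occurs. -/
noncomputable def pairedPos {n : ℕ} (l : Fin n → ℤ) : Finset (Fin n) :=
  Finset.univ.filter fun r => 0 < l r ∧ ∃ t, l t = - l r

/-- Indices of zero entries. -/
noncomputable def zeros {n : ℕ} (l : Fin n → ℤ) : Finset (Fin n) :=
  Finset.univ.filter fun r => l r = 0

lemma lt_of_gt_val {n : ℕ} {l : Fin n → ℤ} (hl : ZPlus l) {x y : Fin n}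
    (h : l y < l x) : x < y := by
  by_contra hc
  push_neg at hc
  exact absurd (hl.1 hc) (not_le.mpr h)

lemma cnt_le_one {n : ℕ} {l : Fin n → ℤ} (hl : ZPlus l) {m : ℤ} (hm : m ≠ 0) :
    cnt l m ≤ 1 := by
  rw [cnt, Finset.card_le_one]
  intro a ha b hb
  simp only [mem_filter] at ha hb
  by_contra hab
  rcases lt_or_gt_of_ne hab with h | h
  · exact hm (ha.2 ▸ hl.2 a b h (ha.2.trans hb.2.symm))
  · exact hm (hb.2 ▸ hl.2 b a h (hb.2.trans ha.2.symm))

lemma atyp_eq {n : ℕ} {l : Fin n → ℤ} (hl : ZPlus l) :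
    atyp l = 2 * (pairedPos l).card + (zeros l).card := by
  classical
  set M := Finset.univ.sup fun r => (l r).natAbs with hMdef
  have hMr : ∀ r, (l r).natAbs ≤ M := fun r => Finset.le_sup (f := fun r => (l r).natAbs) (mem_univ r)
  -- fiberwise count of everything by |l r|
  have hfib : (Finset.univ : Finset (Fin n)).card
      = ∑ m ∈ Finset.Icc 0 M, (Finset.univ.filter fun r => (l r).natAbs = m).card :=
    Finset.card_eq_sum_card_fiberwise fun r _ => Finset.mem_Icc.mpr ⟨Nat.zero_le _, hMr r⟩
  have h0M : Finset.Icc 0 M = insert 0 (Finset.Icc 1 M) := by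
    ext x; simp only [Finset.mem_Icc, Finset.mem_insert]; omega
  have h0not : (0 : ℕ) ∉ Finset.Icc 1 M := by simp
  rw [h0M, Finset.sum_insert h0not] at hfib
  have hzero : (Finset.univ.filter fun r => (l r).natAbs = 0).card = (zeros l).card := by
    congr 1
    apply Finset.filter_congr
    intro r _
    simp [zeros, Int.natAbs_eq_zero]
  -- each nonzero fiber splits as cnt m + cnt (-m)
  have hsplit : ∀ m ∈ Finset.Icc 1 M,
      (Finset.univ.filter fun r => (l r).natAbs = m).card
        = cnt l (m : ℤ) + cnt l (-(m : ℤ)) := by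
    intro m hm
    have hm1 : 1 ≤ m := (Finset.mem_Icc.mp hm).1
    have heq : (Finset.univ.filter fun r => (l r).natAbs = m)
        = (Finset.univ.filter fun r => l r = (m : ℤ))
          ∪ (Finset.univ.filter fun r => l r = -(m : ℤ)) := by
      rw [← Finset.filter_or]
      apply Finset.filter_congr
      intro r _
      simpa using Int.natAbs_eq_iff (a := l r) (n := m)
    rw [heq, Finset.card_union_of_disjoint, cnt, cnt]
    rw [Finset.disjoint_left]
    intro x hx1 hx2
    simp only [mem_filter] at hx1 hx2
    omega
  have hn : n = (zeros l).card + ∑ m ∈ Finset.Icc 1 M, (cnt l (m : ℤ) + cnt l (-(m : ℤ))) := by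
    have h := hfib
    rw [Finset.card_univ, Fintype.card_fin] at h
    have hsum2 : ∑ m ∈ Finset.Icc 1 M, (Finset.univ.filter fun r => (l r).natAbs = m).card
        = ∑ m ∈ Finset.Icc 1 M, (cnt l (m : ℤ) + cnt l (-(m : ℤ))) :=
      Finset.sum_congr rfl hsplit
    omega
  -- count paired positives fiberwise
  have hk : (pairedPos l).card
      = ∑ m ∈ Finset.Icc 1 M, min (cnt l (m : ℤ)) (cnt l (-(m : ℤ))) := by
    have hfib2 : (pairedPos l).card
        = ∑ m ∈ Finset.Icc 1 M, ((pairedPos l).filter fun r => (l r).natAbs = m).card := by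
      apply Finset.card_eq_sum_card_fiberwise
      intro r hr
      simp only [pairedPos, Finset.mem_coe, mem_filter] at hr
      refine Finset.mem_Icc.mpr ⟨?_, hMr r⟩
      have hpos : 0 < l r := by tauto
      exact Int.natAbs_pos.mpr hpos.ne'
    rw [hfib2]
    apply Finset.sum_congr rfl
    intro m hm
    have hm1 : 1 ≤ m := (Finset.mem_Icc.mp hm).1
    have hcm_le : cnt l (m : ℤ) ≤ 1 := cnt_le_one hl (by positivity)
    have hcnm_le : cnt l (-(m : ℤ)) ≤ 1 := by
      apply cnt_le_one hl
      simp only [ne_eq, neg_eq_zero]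
      positivity
    by_cases h : ∃ t, l t = -(m : ℤ)
    · have heq : (pairedPos l).filter (fun r => (l r).natAbs = m)
          = Finset.univ.filter fun r => l r = (m : ℤ) := by
        ext r
        simp only [pairedPos, Finset.filter_filter, mem_filter, mem_univ, true_and]
        constructor
        · rintro ⟨⟨hpos, -⟩, habs⟩
          omega
        · intro hr
          refine ⟨⟨by omega, ?_⟩, by omega⟩
          rw [hr]
          exact h
      rw [heq]
      have hpos : 0 < cnt l (-(m : ℤ)) := by
        obtain ⟨t, ht⟩ := h
        exact Finset.card_pos.mpr ⟨t, mem_filter.mpr ⟨mem_univ t, ht⟩⟩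
      have : (Finset.univ.filter fun r => l r = (m : ℤ)).card = cnt l (m : ℤ) := rfl
      omega
    · have hcnm : cnt l (-(m : ℤ)) = 0 := by
        rw [cnt, Finset.card_eq_zero, Finset.filter_eq_empty_iff]
        intro r _ hr
        exact h ⟨r, hr⟩
      have heq : (pairedPos l).filter (fun r => (l r).natAbs = m) = ∅ := by
        rw [Finset.filter_eq_empty_iff]
        intro r hr habs
        simp only [pairedPos, mem_filter] at hr
        obtain ⟨-, hpos, t, ht⟩ := hr
        have hrm : l r = (m : ℤ) := by omega
        exact h ⟨t, by rw [ht, hrm]⟩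
      rw [heq]
      simp [hcnm]
  -- pointwise identity |a-b| + 2 min a b = a + b
  have hpt : ∀ m ∈ Finset.Icc 1 M,
      (((cnt l (m : ℤ) : ℤ) - (cnt l (-(m : ℤ)) : ℤ)).natAbs
        + 2 * min (cnt l (m : ℤ)) (cnt l (-(m : ℤ))))
        = cnt l (m : ℤ) + cnt l (-(m : ℤ)) := fun m _ => by omega
  have hsum : (∑ m ∈ Finset.Icc 1 M,
        ((cnt l (m : ℤ) : ℤ) - (cnt l (-(m : ℤ)) : ℤ)).natAbs)
      + 2 * ∑ m ∈ Finset.Icc 1 M, min (cnt l (m : ℤ)) (cnt l (-(m : ℤ)))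
      = ∑ m ∈ Finset.Icc 1 M, (cnt l (m : ℤ) + cnt l (-(m : ℤ))) := by
    rw [Finset.mul_sum, ← Finset.sum_add_distrib]
    exact Finset.sum_congr rfl hpt
  rw [atyp, ← hMdef]
  omega

lemma exists_pairs {n : ℕ} {l : Fin n → ℤ} (hl : ZPlus l) :
    ∃ r s : Fin ((pairedPos l).card + (zeros l).card / 2) → Fin n,
      StrictMono r ∧ StrictAnti s ∧ (∀ q, r q < s q) ∧
      ∀ q, l (r q) + l (s q) = 0 := by
  classical
  set k := (pairedPos l).card with hkdef
  set z := (zeros l).card with hzdef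
  let a : Fin k ↪o Fin n := (pairedPos l).orderEmbOfFin hkdef.symm
  let e : Fin z ↪o Fin n := (zeros l).orderEmbOfFin hzdef.symm
  have ha_mem : ∀ i, 0 < l (a i) ∧ ∃ t, l t = - l (a i) := by
    intro i
    have h := Finset.orderEmbOfFin_mem (pairedPos l) hkdef.symm i
    simp only [pairedPos, mem_filter, mem_univ, true_and] at h
    exact h
  have he_mem : ∀ j, l (e j) = 0 := by
    intro j
    have h := Finset.orderEmbOfFin_mem (zeros l) hzdef.symm j
    simp only [zeros, mem_filter, mem_univ, true_and] at h
    exact h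
  let φ : Fin n → Fin n := fun x => if h : ∃ t, l t = - l x then h.choose else x
  have hφ : ∀ i : Fin k, l (φ (a i)) = - l (a i) := by
    intro i
    have h := (ha_mem i).2
    simp only [φ, dif_pos h]
    exact h.choose_spec
  have ha_pos : ∀ i, 0 < l (a i) := fun i => (ha_mem i).1
  have ha_strictval : ∀ {i j : Fin k}, i < j → l (a j) < l (a i) := by
    intro i j hij
    have h1 : a i < a j := a.strictMono hij
    have h2 : l (a j) ≤ l (a i) := hl.1 h1.le
    rcases h2.lt_or_eq with h | h
    · exact h
    · exact absurd (hl.2 _ _ h1 h.symm) (by have := ha_pos i; omega)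
  refine ⟨fun q => if h : (q : ℕ) < k then a ⟨q, h⟩
      else e ⟨(q : ℕ) - k, by have := q.2; omega⟩,
    fun q => if h : (q : ℕ) < k then φ (a ⟨q, h⟩)
      else e ⟨z - 1 - ((q : ℕ) - k), by have := q.2; omega⟩, ?_, ?_, ?_, ?_⟩
  · -- StrictMono r
    intro q q' hqq'
    have hqq : (q : ℕ) < (q' : ℕ) := hqq'
    dsimp only
    split_ifs with h1 h2 h2
    · exact a.strictMono (by exact Fin.mk_lt_mk.mpr hqq)
    · apply lt_of_gt_val hl
      rw [he_mem]
      exact ha_pos _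
    · omega
    · exact e.strictMono (by apply Fin.mk_lt_mk.mpr; omega)
  · -- StrictAnti s
    intro q q' hqq'
    have hqq : (q : ℕ) < (q' : ℕ) := hqq'
    dsimp only
    split_ifs with h1 h2 h2
    · apply lt_of_gt_val hl
      rw [hφ, hφ]
      have := ha_strictval (show (⟨q, h2⟩ : Fin k) < ⟨q', h1⟩ from Fin.mk_lt_mk.mpr hqq)
      omega
    · omega
    · apply lt_of_gt_val hl
      rw [hφ, he_mem]
      have := ha_pos (⟨q, h2⟩ : Fin k)
      omega
    · apply e.strictMono
      apply Fin.mk_lt_mk.mpr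
      have hq2 := q'.2
      omega
  · -- r q < s q
    intro q
    dsimp only
    split_ifs with h
    · apply lt_of_gt_val hl
      rw [hφ]
      have := ha_pos (⟨q, h⟩ : Fin k)
      omega
    · apply e.strictMono
      apply Fin.mk_lt_mk.mpr
      have hq2 := q.2
      omega
  · -- sums vanish
    intro q
    dsimp only
    split_ifs with h
    · rw [hφ]; ring
    · rw [he_mem, he_mem]; ring

/-- for `λ ∈ ℤⁿ₊`, the largest `p` for which there exist indices
`r_1 < … < r_p < s_p < … < s_1` with `λ_{r_q} + λ_{s_q} = 0` for all `q` is
`⌊#λ/2⌋`. -/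
theorem stmt1 (n : ℕ) (l : Fin n → ℤ) (hl : ZPlus l) :
    IsGreatest {p : ℕ | ∃ r s : Fin p → Fin n,
        StrictMono r ∧ StrictAnti s ∧ (∀ q, r q < s q) ∧
        ∀ q, l (r q) + l (s q) = 0}
      (atyp l / 2) := by
  classical
  have hae := atyp_eq hl
  constructor
  · -- membership
    have h2 : atyp l / 2 = (pairedPos l).card + (zeros l).card / 2 := by omega
    simp only [Set.mem_setOf_eq, h2]
    exact exists_pairs hl
  · -- upper bound
    rintro p ⟨r, s, hr, hs, hrs, hv⟩
    have hvge : ∀ q, 0 ≤ l (r q) := by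
      intro q
      have h1 : l (s q) ≤ l (r q) := hl.1 (hrs q).le
      have := hv q
      omega
    have hcross : ∀ q q', r q < s q' := by
      intro q q'
      calc r q ≤ r (max q q') := hr.monotone (le_max_left _ _)
        _ < s (max q q') := hrs _
        _ ≤ s q' := hs.antitone (le_max_right _ _)
    set P := Finset.univ.filter fun q => 0 < l (r q) with hPdef
    set Q := Finset.univ.filter fun q => l (r q) = 0 with hQdef
    have hPQ : P.card + Q.card = p := by
      have hQ' : Q = Finset.univ.filter fun q => ¬ 0 < l (r q) := by
        ext q
        simp only [hQdef, mem_filter, mem_univ, true_and]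
        have := hvge q
        omega
      rw [hQ', hPdef, Finset.card_filter_add_card_filter_not,
        Finset.card_univ, Fintype.card_fin]
    have hP : P.card ≤ (pairedPos l).card := by
      apply Finset.card_le_card_of_injOn r
      · intro q hq
        simp only [hPdef, Finset.mem_coe, mem_filter, mem_univ, true_and] at hq
        simp only [pairedPos, Finset.mem_coe, mem_filter, mem_univ, true_and]
        exact ⟨hq, s q, by have := hv q; omega⟩
      · exact fun x _ y _ h => hr.injective h
    have hQz : 2 * Q.card ≤ (zeros l).card := by
      have h1 : Q.image r ∪ Q.image s ⊆ zeros l := by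
        intro x hx
        simp only [mem_union, Finset.mem_image] at hx
        simp only [zeros, mem_filter, mem_univ, true_and]
        rcases hx with ⟨q, hq, rfl⟩ | ⟨q, hq, rfl⟩
        · simp only [hQdef, mem_filter] at hq
          exact hq.2
        · simp only [hQdef, mem_filter] at hq
          have := hv q
          omega
      have h2 : Disjoint (Q.image r) (Q.image s) := by
        rw [Finset.disjoint_left]
        intro x hx1 hx2
        obtain ⟨q, _, rfl⟩ := Finset.mem_image.mp hx1
        obtain ⟨q', _, he⟩ := Finset.mem_image.mp hx2
        exact (hcross q q').ne' he
      have h3 := Finset.card_le_card h1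
      rw [Finset.card_union_of_disjoint h2,
        Finset.card_image_of_injective Q hr.injective,
        Finset.card_image_of_injective Q hs.injective] at h3
      omega
    omega
end

section
/- With λ ∈ ℤⁿ₊, p = ⌊#λ/2⌋, and the data r_q, s_q, k_q, ν_θ as in the construction: for every θ ∈ {0,1}^p the tuple ν_θ has pairwise distinct nonzero entries; consequently there is exactly one element of ℤⁿ₊ that is a rearrangement of ν_θ (denoted R_θ(λ)). -/
/-- `z(λ)`, the number of zero entries of `λ`. -/
def zcount {n : ℕ} (l : Fin n → ℤ) : ℕ :=
  (Finset.univ.filter fun r => l r = 0).card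

/-- `ν_θ = λ + Σ_q θ_q k_q (δ_{r_q} − δ_{s_q})`. -/
def nu {n p : ℕ} (l : Fin n → ℤ) (r s : Fin p → Fin n) (k : Fin p → ℕ)
    (θ : Fin p → Bool) : Fin n → ℤ := fun t =>
  l t + ∑ q : Fin p, (if θ q then (k q : ℤ) else 0) *
      ((if r q = t then 1 else 0) - (if s q = t then 1 else 0))

/-- in the construction of the Main Theorem, every `ν_θ` has
pairwise distinct nonzero entries, so exactly one element of `ℤⁿ₊` is a
rearrangement of `ν_θ`. -/
theorem stmt2 (n p : ℕ) (l : Fin n → ℤ) (hl : ZPlus l)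
    (hp : p = atyp l / 2)
    (r s : Fin p → Fin n) (hr : StrictMono r) (hs : StrictAnti s)
    (hrs : ∀ q, r q < s q) (hpair : ∀ q, l (r q) + l (s q) = 0)
    (I : ℕ → Set ℕ) (k : Fin p → ℕ)
    (hI0 : I 0 = {m : ℕ | ∃ t : Fin n, (l t).natAbs = m})
    (hstep : ∀ q : Fin p,
      (0 < l (r q) ∧
        IsLeast {m : ℕ | 0 < m ∧ (l (r q) + (m : ℤ)).toNat ∉ I q.val} (k q) ∧
        I (q.val + 1) = insert (l (r q) + (k q : ℤ)).toNat (I q.val)) ∨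
      (l (r q) = 0 ∧ ∃ k' : ℕ,
        ((Even (zcount l) ∧
            IsLeast {m : ℕ | 0 < m ∧ m ∉ I q.val} (k q) ∧
            IsLeast {m : ℕ | 0 < m ∧ m ∉ I q.val ∧ m ≠ k q} k') ∨
         (¬ Even (zcount l) ∧
            IsLeast {m : ℕ | 0 < m ∧ m ∉ I q.val} k' ∧
            IsLeast {m : ℕ | 0 < m ∧ m ∉ I q.val ∧ m ≠ k'} (k q))) ∧
        I (q.val + 1) = insert (k q) (insert k' (I q.val)))) :
    ∀ θ : Fin p → Bool,
      (∀ t t' : Fin n, t ≠ t' →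
        nu l r s k θ t = nu l r s k θ t' → nu l r s k θ t = 0) ∧
      (∃! μ : Fin n → ℤ, ZPlus μ ∧
        ∃ π : Equiv.Perm (Fin n), ∀ t, μ t = nu l r s k θ (π t)) := by
  obtain ⟨hanti, hzero⟩ := hl
  have zp : ∀ x y : Fin n, x ≠ y → l x = l y → l x = 0 := by
    intro x y hxy hval
    rcases lt_or_gt_of_ne hxy with h | h
    · exact hzero x y h hval
    · rw [hval]; exact hzero y x h hval.symm
  have hrs' : ∀ a b : Fin p, r a < s b := by
    intro a b
    rcases le_total a b with h | h
    · exact (hr.monotone h).trans_lt (hrs b)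
    · exact (hrs a).trans_le (hs.antitone h)
  have hlr : ∀ q, 0 ≤ l (r q) := by
    intro q
    have h1 : l (s q) ≤ l (r q) := hanti (hrs q).le
    have h2 := hpair q
    linarith
  have Isub : ∀ q : Fin p, I q.val ⊆ I (q.val + 1) := by
    intro q
    rcases hstep q with ⟨_, _, hI⟩ | ⟨_, k', _, hI⟩
    · rw [hI]; exact Set.subset_insert _ _
    · rw [hI]; exact (Set.subset_insert _ _).trans (Set.subset_insert _ _)
  have Imono : ∀ b : ℕ, b ≤ p → ∀ a : ℕ, a ≤ b → I a ⊆ I b := by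
    intro b
    induction b with
    | zero => intro _ a ha; interval_cases a; exact subset_rfl
    | succ b ih =>
      intro hb a ha
      rcases Nat.eq_or_lt_of_le ha with h | h
      · rw [h]
      · have h' : a ≤ b := Nat.lt_succ_iff.mp h
        exact (ih (Nat.le_of_succ_le hb) a h').trans (Isub ⟨b, hb⟩)
  have keyA : ∀ q : Fin p, 0 < k q ∧ (l (r q) + (k q : ℤ)).toNat ∉ I q.val ∧
      (l (r q) + (k q : ℤ)).toNat ∈ I (q.val + 1) := by
    intro q
    rcases hstep q with ⟨hpos, ⟨⟨hk0, hkni⟩, _⟩, hI⟩ | ⟨h0, k', hcase, hI⟩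
    · exact ⟨hk0, hkni, by rw [hI]; exact Set.mem_insert _ _⟩
    · have hval : (l (r q) + (k q : ℤ)).toNat = k q := by rw [h0]; simp
      rcases hcase with ⟨_, ⟨⟨hk0, hkni⟩, _⟩, _⟩ | ⟨_, _, ⟨⟨hk0, hkni, _⟩, _⟩⟩
      · exact ⟨hk0, by rw [hval]; exact hkni,
          by rw [hval, hI]; exact Set.mem_insert _ _⟩
      · exact ⟨hk0, by rw [hval]; exact hkni,
          by rw [hval, hI]; exact Set.mem_insert _ _⟩
  have I0_mem : ∀ t, (l t).natAbs ∈ I 0 := by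
    intro t; rw [hI0]; exact ⟨t, rfl⟩
  have I0_sub : ∀ q : Fin p, I 0 ⊆ I q.val :=
    fun q => Imono q.val q.isLt.le 0 (Nat.zero_le _)
  intro θ
  set g : Fin p → ℤ := fun q => l (r q) + (if θ q then (k q : ℤ) else 0) with hg
  have nu_val : ∀ t, nu l r s k θ t = l t + ∑ q : Fin p,
      (if θ q then (k q : ℤ) else 0) *
      ((if r q = t then 1 else 0) - (if s q = t then 1 else 0)) := fun _ => rfl
  have nu_r : ∀ q0 : Fin p, nu l r s k θ (r q0) = g q0 := by
    intro q0
    rw [nu_val, Finset.sum_eq_single q0]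
    · have h2 : s q0 ≠ r q0 := (hrs' q0 q0).ne'
      simp [hg, h2]
    · intro b _ hb
      have h1 : r b ≠ r q0 := fun h => hb (hr.injective h)
      have h2 : s b ≠ r q0 := (hrs' q0 b).ne'
      simp [h1, h2]
    · intro h; exact absurd (Finset.mem_univ q0) h
  have nu_s : ∀ q0 : Fin p, nu l r s k θ (s q0) = -(g q0) := by
    intro q0
    rw [nu_val, Finset.sum_eq_single q0]
    · have h1 : r q0 ≠ s q0 := (hrs' q0 q0).ne
      have hpq := hpair q0
      rw [if_neg h1, if_pos rfl]
      simp only [hg]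
      linarith
    · intro b _ hb
      have h1 : r b ≠ s q0 := (hrs' b q0).ne
      have h2 : s b ≠ s q0 := fun h => hb (hs.injective h)
      simp [h1, h2]
    · intro h; exact absurd (Finset.mem_univ q0) h
  have nu_o : ∀ t, (∀ q, r q ≠ t) → (∀ q, s q ≠ t) → nu l r s k θ t = l t := by
    intro t h1 h2
    rw [nu_val, Finset.sum_eq_zero, add_zero]
    intro q _
    simp [h1 q, h2 q]
  have g_nonneg : ∀ q, 0 ≤ g q := by
    intro q
    have h1 := hlr q
    have h2 : (0:ℤ) ≤ (k q : ℤ) := Int.natCast_nonneg _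
    simp only [hg]
    split_ifs <;> linarith
  have g_false : ∀ q, θ q = false → g q = l (r q) := by
    intro q hq; simp [hg, hq]
  have g_true : ∀ q, θ q = true →
      0 < g q ∧ (g q).toNat ∉ I q.val ∧ (g q).toNat ∈ I (q.val + 1) := by
    intro q hq
    have hG : g q = l (r q) + (k q : ℤ) := by simp [hg, hq]
    obtain ⟨hk0, hni, hin⟩ := keyA q
    refine ⟨?_, by rw [hG]; exact hni, by rw [hG]; exact hin⟩
    have := hlr q
    rw [hG]
    have : (0:ℤ) < (k q : ℤ) := by exact_mod_cast hk0
    linarith [hlr q]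
  have notin_l : ∀ (q : Fin p) (t : Fin n), θ q = true →
      l t ≠ g q ∧ l t ≠ -(g q) := by
    intro q t hq
    obtain ⟨hgpos, hni, _⟩ := g_true q hq
    constructor
    · intro h
      apply hni
      have he : (g q).toNat = (l t).natAbs := by omega
      rw [he]
      exact I0_sub q (I0_mem t)
    · intro h
      apply hni
      have he : (g q).toNat = (l t).natAbs := by omega
      rw [he]
      exact I0_sub q (I0_mem t)
  have g_distinct : ∀ q q' : Fin p, q < q' → g q = g q' → g q = 0 := by
    intro q q' hlt heq
    cases hθ' : θ q' with
    | false =>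
      cases hθ : θ q with
      | false =>
        have h1 := g_false q hθ
        have h2 := g_false q' hθ'
        rw [h1]
        apply zp
        · exact fun h => absurd (hr.injective h) hlt.ne
        · rw [← h1, ← h2]; exact heq
      | true =>
        exact absurd ((g_false q' hθ') ▸ heq).symm (notin_l q (r q') hθ).1
    | true =>
      exfalso
      apply (g_true q' hθ').2.1
      have hsub : I (q.val + 1) ⊆ I q'.val :=
        Imono q'.val q'.isLt.le (q.val + 1) hlt
      rw [← heq]
      cases hθ : θ q with
      | true => exact hsub (g_true q hθ).2.2
      | false =>
        have h1 := g_false q hθ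
        have h2 := hlr q
        have he : (g q).toNat = (l (r q)).natAbs := by omega
        rw [he]
        exact I0_sub q' (I0_mem (r q))
  have g_distinct' : ∀ q q' : Fin p, q ≠ q' → g q = g q' → g q = 0 := by
    intro q q' hne heq
    rcases lt_or_gt_of_ne hne with h | h
    · exact g_distinct q q' h heq
    · rw [heq]; exact g_distinct q' q h heq.symm
  have tri : ∀ t : Fin n, (∃ q, r q = t) ∨ (∃ q, s q = t) ∨
      nu l r s k θ t = l t := by
    intro t
    by_cases h1 : ∃ q, r q = t
    · exact Or.inl h1
    · by_cases h2 : ∃ q, s q = t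
      · exact Or.inr (Or.inl h2)
      · push_neg at h1 h2
        exact Or.inr (Or.inr (nu_o t h1 h2))
  have main : ∀ t t' : Fin n, t ≠ t' →
      nu l r s k θ t = nu l r s k θ t' → nu l r s k θ t = 0 := by
    intro t t' hne heq
    rcases tri t with ⟨q, rfl⟩ | ⟨q, rfl⟩ | ho
    · rw [nu_r] at heq ⊢
      rcases tri t' with ⟨q', rfl⟩ | ⟨q', rfl⟩ | ho'
      · rw [nu_r] at heq
        exact g_distinct' q q' (fun h => hne (congrArg r h)) heq
      · rw [nu_s] at heq
        have := g_nonneg q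
        have := g_nonneg q'
        linarith
      · rw [ho'] at heq
        cases hθ : θ q with
        | false =>
          rw [g_false q hθ] at heq ⊢
          exact zp _ _ hne heq
        | true => exact absurd heq.symm (notin_l q t' hθ).1
    · rw [nu_s] at heq ⊢
      rcases tri t' with ⟨q', rfl⟩ | ⟨q', rfl⟩ | ho'
      · rw [nu_r] at heq
        have := g_nonneg q
        have := g_nonneg q'
        linarith
      · rw [nu_s] at heq
        have h0 := g_distinct' q q' (fun h => hne (congrArg s h)) (by linarith)
        rw [h0, neg_zero]
      · rw [ho'] at heq
        cases hθ : θ q with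
        | false =>
          have h1 : -(g q) = l (s q) := by
            rw [g_false q hθ]; linarith [hpair q]
          rw [h1] at heq ⊢
          exact zp _ _ hne heq
        | true => exact absurd heq.symm (notin_l q t' hθ).2
    · rw [ho] at heq ⊢
      rcases tri t' with ⟨q', rfl⟩ | ⟨q', rfl⟩ | ho'
      · rw [nu_r] at heq
        cases hθ : θ q' with
        | false =>
          rw [g_false q' hθ] at heq
          exact zp _ _ hne heq
        | true => exact absurd heq (notin_l q' t hθ).1
      · rw [nu_s] at heq
        cases hθ : θ q' with
        | false =>
          have h1 : -(g q') = l (s q') := by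
            rw [g_false q' hθ]; linarith [hpair q']
          rw [h1] at heq
          exact zp _ _ hne heq
        | true => exact absurd heq (notin_l q' t hθ).2
      · rw [ho'] at heq
        exact zp _ _ hne heq
  refine ⟨main, ?_⟩
  set f : Fin n → ℤ := fun t => -(nu l r s k θ t) with hf
  set σ := Tuple.sort f with hσ
  have hmσ : Monotone (f ∘ σ) := Tuple.monotone_sort f
  refine ⟨fun t => nu l r s k θ (σ t), ⟨⟨?_, ?_⟩, σ, fun t => rfl⟩, ?_⟩
  · intro a b hab
    have h := hmσ hab
    simp only [Function.comp, hf] at h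
    linarith
  · intro a b hab habv
    exact main _ _ (fun h => hab.ne (σ.injective h)) habv
  · rintro μ ⟨⟨hμa, hμz⟩, π, hπ⟩
    have hmπ : Monotone (f ∘ π) := by
      intro a b hab
      have h := hμa hab
      simp only [Function.comp, hf]
      rw [← hπ a, ← hπ b]
      linarith
    have huni := Tuple.unique_monotone hmπ hmσ
    funext t
    have h := congrFun huni t
    simp only [Function.comp, hf] at h
    rw [hπ t]
    linarith
end

section
/- Let n ≥ 1 and λ ∈ ℤⁿ₊. Then in the field K one has (x_1 + … + x_n) · p_λ = Σ_r p_{λ+δ_r}, where the sum is over all r ∈ {1,…,n} such that λ + δ_r ∈ ℤⁿ₊ and such that it is not the case that both λ_r = −1 and z(λ) is odd. -/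
open scoped Classical
open Finset Polynomial

noncomputable section

/-- The field `K = ℚ(x_1,…,x_n)`. -/
abbrev K (n : ℕ) := FractionRing (MvPolynomial (Fin n) ℚ)

/-- The variable `x_i` as an element of `K`. -/
def Xv {n : ℕ} (i : Fin n) : K n :=
  algebraMap (MvPolynomial (Fin n) ℚ) (K n) (MvPolynomial.X i)

/-- Schur's `P`-function
`p_λ = Σ_{w ∈ Sₙ/S_λ} w( x^λ Π_{i<j, λ_i>λ_j} (x_i+x_j)/(x_i−x_j) )`.
Since the summand only depends on the coset `w·S_λ`, the sum over coset
representatives equals `|S_λ|⁻¹` times the sum over the whole of `Sₙ` (the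
ground field has characteristic zero). -/
def schurP {n : ℕ} (l : Fin n → ℤ) : K n :=
  ((Finset.univ.filter fun w : Equiv.Perm (Fin n) => ∀ t, l (w t) = l t).card : K n)⁻¹ *
    ∑ w : Equiv.Perm (Fin n),
      (∏ i, Xv (w i) ^ (l i)) *
        ∏ p ∈ Finset.univ.filter (fun p : Fin n × Fin n => p.1 < p.2 ∧ l p.2 < l p.1),
          (Xv (w p.1) + Xv (w p.2)) / (Xv (w p.1) - Xv (w p.2))

/-- `λ + δ_r`. -/
def addDelta {n : ℕ} (l : Fin n → ℤ) (r : Fin n) : Fin n → ℤ :=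
  fun t => l t + if t = r then 1 else 0

namespace Stmt5Aux


variable {E : Type*} [Field E] {ι : Type*} [DecidableEq ι]

theorem star_eq (s : Finset ι) (y : ι → E) (hinj : Set.InjOn y s) :
    (∏ i ∈ s, (X + C (y i))) - ∏ i ∈ s, (X - C (y i))
      = ∑ k ∈ s, C (2 * y k * ∏ t ∈ s.erase k, ((y k + y t) / (y k - y t))) *
          ∏ t ∈ s.erase k, (X - C (y t)) := by
  rcases s.eq_empty_or_nonempty with rfl | hs
  · simp
  have hcard : 0 < #s := hs.card_pos
  have hmon1 : (∏ i ∈ s, (X + C (y i))).Monic :=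
    monic_prod_of_monic _ _ fun i _ => monic_X_add_C (y i)
  have hmon2 : (∏ i ∈ s, (X - C (y i))).Monic :=
    monic_prod_of_monic _ _ fun i _ => monic_X_sub_C (y i)
  have hdeg1 : (∏ i ∈ s, (X + C (y i))).natDegree = #s := by
    rw [natDegree_prod_of_monic _ _ fun i _ => monic_X_add_C (y i)]
    simp
  have hdeg2 : (∏ i ∈ s, (X - C (y i))).natDegree = #s := by
    rw [natDegree_prod_of_monic _ _ fun i _ => monic_X_sub_C (y i)]
    simp
  apply Polynomial.eq_of_degrees_lt_of_eval_index_eq (v := y) s hinj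
  · -- degree of difference < #s
    calc (∏ i ∈ s, (X + C (y i)) - ∏ i ∈ s, (X - C (y i))).degree
        < (∏ i ∈ s, (X + C (y i))).degree := by
          apply degree_sub_lt
          · rw [degree_eq_natDegree hmon1.ne_zero, degree_eq_natDegree hmon2.ne_zero, hdeg1, hdeg2]
          · exact hmon1.ne_zero
          · rw [hmon1.leadingCoeff, hmon2.leadingCoeff]
      _ ≤ (#s : WithBot ℕ) := by
          rw [degree_eq_natDegree hmon1.ne_zero, hdeg1]
  · apply lt_of_le_of_lt (degree_sum_le _ _)
    rw [Finset.sup_lt_iff (by exact_mod_cast WithBot.bot_lt_coe (#s))]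
    intro k hk
    have hP : (∏ t ∈ s.erase k, (X - C (y t))).Monic :=
      monic_prod_of_monic _ _ fun i _ => monic_X_sub_C (y i)
    have hPd : (∏ t ∈ s.erase k, (X - C (y t))).natDegree = #s - 1 := by
      rw [natDegree_prod_of_monic _ _ fun i _ => monic_X_sub_C (y i)]
      simp [Finset.card_erase_of_mem hk]
    calc (C (2 * y k * ∏ t ∈ s.erase k, ((y k + y t) / (y k - y t))) *
            ∏ t ∈ s.erase k, (X - C (y t))).degree
        ≤ (∏ t ∈ s.erase k, (X - C (y t))).degree := by
          rw [← smul_eq_C_mul]; exact degree_smul_le _ _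
      _ < (#s : WithBot ℕ) := by
          rw [degree_eq_natDegree hP.ne_zero, hPd]
          exact_mod_cast Nat.sub_lt hcard one_pos
  · intro i hi
    have hLHS : Polynomial.eval (y i) ((∏ i ∈ s, (X + C (y i))) - ∏ i ∈ s, (X - C (y i)))
        = 2 * y i * ∏ t ∈ s.erase i, (y i + y t) := by
      rw [eval_sub, eval_prod, eval_prod]
      have h2 : ∏ j ∈ s, Polynomial.eval (y i) (X - C (y j)) = 0 :=
        Finset.prod_eq_zero hi (by simp)
      rw [h2, sub_zero, ← Finset.mul_prod_erase s _ hi]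
      simp [two_mul, add_mul]
    rw [hLHS, eval_finset_sum, Finset.sum_eq_single i]
    · rw [eval_mul, eval_C, eval_prod, mul_assoc 2 (y i), mul_assoc (2 * y i),
        ← Finset.prod_mul_distrib, ← mul_assoc]
      congr 1
      apply Finset.prod_congr rfl
      intro t ht
      have hne : y i - y t ≠ 0 := by
        rw [sub_ne_zero]
        exact fun h => (Finset.mem_erase.mp ht).1.symm (hinj hi (Finset.mem_erase.mp ht).2 h)
      simp only [eval_sub, eval_X, eval_C]
      rw [div_mul_cancel₀ _ hne]
    · intro k hk hki
      rw [eval_mul, eval_prod]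
      have : ∏ t ∈ s.erase k, Polynomial.eval (y i) (X - C (y t)) = 0 :=
        Finset.prod_eq_zero (Finset.mem_erase.mpr ⟨Ne.symm hki, hi⟩) (by simp)
      rw [this, mul_zero]
    · intro h; exact absurd hi h


variable [CharZero E]

theorem id2 (s : Finset ι) (y : ι → E) (hinj : Set.InjOn y s) :
    ∑ k ∈ s, y k * ∏ t ∈ s.erase k, ((y k + y t) / (y k - y t)) = ∑ k ∈ s, y k := by
  rcases s.eq_empty_or_nonempty with rfl | hs
  · simp
  have hcard : 0 < #s := hs.card_pos
  have h := congrArg (fun P => Polynomial.coeff P (#s - 1)) (star_eq s y hinj)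
  simp only at h
  have hadd : (∏ i ∈ s, (X + C (y i))) = ∏ i ∈ s, (X - C (-(y i))) := by
    apply Finset.prod_congr rfl; intro i _; rw [map_neg, sub_neg_eq_add]
  have hc1 : (∏ i ∈ s, (X + C (y i))).coeff (#s - 1) = ∑ i ∈ s, y i := by
    rw [hadd, prod_X_sub_C_coeff_card_pred s _ hcard]
    simp
  have hc2 : (∏ i ∈ s, (X - C (y i))).coeff (#s - 1) = -∑ i ∈ s, y i :=
    prod_X_sub_C_coeff_card_pred s _ hcard
  rw [coeff_sub, hc1, hc2, finset_sum_coeff] at h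
  have hterm : ∀ k ∈ s, (C (2 * y k * ∏ t ∈ s.erase k, ((y k + y t) / (y k - y t))) *
      ∏ t ∈ s.erase k, (X - C (y t))).coeff (#s - 1)
      = 2 * (y k * ∏ t ∈ s.erase k, ((y k + y t) / (y k - y t))) := by
    intro k hk
    have hP : (∏ t ∈ s.erase k, (X - C (y t))).Monic :=
      monic_prod_of_monic _ _ fun i _ => monic_X_sub_C (y i)
    have hPd : (∏ t ∈ s.erase k, (X - C (y t))).natDegree = #s - 1 := by
      rw [natDegree_prod_of_monic _ _ fun i _ => monic_X_sub_C (y i)]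
      simp [Finset.card_erase_of_mem hk]
    rw [coeff_C_mul, ← hPd, hP.coeff_natDegree, mul_one, mul_assoc]
  rw [Finset.sum_congr rfl hterm, ← Finset.mul_sum] at h
  have h2 : (2 : E) * ∑ k ∈ s, y k = 2 * ∑ k ∈ s, y k * ∏ t ∈ s.erase k,
      ((y k + y t) / (y k - y t)) := by
    rw [← h]; ring
  exact (mul_left_cancel₀ (two_ne_zero) h2).symm

theorem id1 (s : Finset ι) (y : ι → E) (hinj : Set.InjOn y s) (hy0 : ∀ i ∈ s, y i ≠ 0) :
    ∑ k ∈ s, ∏ t ∈ s.erase k, ((y k + y t) / (y k - y t))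
      = if Even #s then 0 else 1 := by
  rcases s.eq_empty_or_nonempty with rfl | hs
  · simp
  have hcard : 0 < #s := hs.card_pos
  have h := congrArg (Polynomial.eval (0 : E)) (star_eq s y hinj)
  simp only [eval_sub, eval_prod, eval_finset_sum, eval_mul, eval_C, eval_add, eval_X,
    zero_add, zero_sub] at h
  have hY : ∏ i ∈ s, y i ≠ 0 := Finset.prod_ne_zero_iff.mpr hy0
  have hneg : ∏ i ∈ s, -y i = (-1 : E) ^ #s * ∏ i ∈ s, y i := by
    rw [← Finset.prod_const, ← Finset.prod_mul_distrib]
    simp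
  have hterm : ∀ k ∈ s, 2 * y k * (∏ t ∈ s.erase k, ((y k + y t) / (y k - y t))) *
      ∏ t ∈ s.erase k, -y t
      = (2 * (-1 : E) ^ (#s - 1) * ∏ i ∈ s, y i) *
        ∏ t ∈ s.erase k, ((y k + y t) / (y k - y t)) := by
    intro k hk
    have : ∏ t ∈ s.erase k, -y t = (-1 : E) ^ (#s - 1) * ∏ t ∈ s.erase k, y t := by
      rw [← Finset.card_erase_of_mem hk, ← Finset.prod_const, ← Finset.prod_mul_distrib]
      simp
    rw [this, ← Finset.mul_prod_erase s y hk]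
    ring
  rw [Finset.sum_congr rfl hterm, ← Finset.mul_sum, hneg] at h
  rcases Nat.even_or_odd #s with he | ho
  · rw [if_pos he]
    have h1 : (-1 : E) ^ #s = 1 := he.neg_one_pow
    have h2 : (-1 : E) ^ (#s - 1) = -1 := (Nat.Even.sub_odd hcard he odd_one).neg_one_pow
    rw [h1, h2] at h
    have key : (2 * ∏ i ∈ s, y i) * (∑ k ∈ s, ∏ t ∈ s.erase k, ((y k + y t) / (y k - y t)))
        = (2 * ∏ i ∈ s, y i) * 0 := by linear_combination h
    exact mul_left_cancel₀ (mul_ne_zero two_ne_zero hY) key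
  · rw [if_neg (Nat.not_even_iff_odd.mpr ho)]
    have h1 : (-1 : E) ^ #s = -1 := ho.neg_one_pow
    have h2 : (-1 : E) ^ (#s - 1) = 1 := (Nat.Odd.sub_odd ho odd_one).neg_one_pow
    rw [h1, h2] at h
    have key : (2 * ∏ i ∈ s, y i) * (∑ k ∈ s, ∏ t ∈ s.erase k, ((y k + y t) / (y k - y t)))
        = (2 * ∏ i ∈ s, y i) * 1 := by linear_combination -h
    exact mul_left_cancel₀ (mul_ne_zero two_ne_zero hY) key


theorem id1' (s : Finset ι) (y : ι → E) (hinj : Set.InjOn y s) (hy0 : ∀ i ∈ s, y i ≠ 0) :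
    ∑ k ∈ s, ∏ t ∈ s.erase k, ((y t + y k) / (y t - y k)) = if Even #s then 0 else 1 := by
  have h : ∀ k ∈ s, ∏ t ∈ s.erase k, ((y t + y k) / (y t - y k))
      = (-1 : E) ^ (#s - 1) * ∏ t ∈ s.erase k, ((y k + y t) / (y k - y t)) := by
    intro k hk
    rw [← Finset.card_erase_of_mem hk, ← Finset.prod_const, ← Finset.prod_mul_distrib]
    apply Finset.prod_congr rfl
    intro t _
    rw [neg_one_mul, show y t - y k = -(y k - y t) by ring, div_neg, add_comm]
  rw [Finset.sum_congr rfl h, ← Finset.mul_sum, id1 s y hinj hy0]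
  rcases Nat.even_or_odd #s with he | ho
  · simp [he]
  · rw [if_neg (Nat.not_even_iff_odd.mpr ho), mul_one]
    exact (Nat.Odd.sub_odd ho odd_one).neg_one_pow

section Main
variable {n : ℕ}
open Equiv

instance K_charZero : CharZero (K n) :=
  charZero_of_injective_algebraMap (IsFractionRing.injective (MvPolynomial (Fin n) ℚ) (K n))

theorem Xv_injective : Function.Injective (Xv (n := n)) := fun i j h =>
  MvPolynomial.X_injective (IsFractionRing.injective (MvPolynomial (Fin n) ℚ) (K n) h)

theorem Xv_ne_zero (i : Fin n) : Xv i ≠ 0 := by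
  intro h
  have : (MvPolynomial.X i : MvPolynomial (Fin n) ℚ) = 0 :=
    IsFractionRing.injective (MvPolynomial (Fin n) ℚ) (K n) (by simpa [Xv] using h)
  exact MvPolynomial.X_ne_zero i this

/-- the factor `(x_{w a} + x_{w b})/(x_{w a} - x_{w b})`. -/
def FF (w : Equiv.Perm (Fin n)) (p : Fin n × Fin n) : K n :=
  (Xv (w p.1) + Xv (w p.2)) / (Xv (w p.1) - Xv (w p.2))

theorem FF_symm (w : Equiv.Perm (Fin n)) (a b : Fin n) : FF w (b, a) = - FF w (a, b) := by
  unfold FF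
  simp only
  rw [add_comm, show Xv (w b) - Xv (w a) = -(Xv (w a) - Xv (w b)) by ring, div_neg]

theorem FF_mul (w τ : Equiv.Perm (Fin n)) (p : Fin n × Fin n) :
    FF (w * τ) p = FF w (τ p.1, τ p.2) := rfl

/-- pair set: sorted pairs not both inside `A`. -/
def PZ (A : Finset (Fin n)) : Finset (Fin n × Fin n) :=
  Finset.univ.filter fun p => p.1 < p.2 ∧ ¬(p.1 ∈ A ∧ p.2 ∈ A)

def mono (m : Fin n → ℤ) (w : Equiv.Perm (Fin n)) : K n := ∏ i, Xv (w i) ^ (m i)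

def SS (m : Fin n → ℤ) (P : Finset (Fin n × Fin n)) : K n :=
  ∑ w : Equiv.Perm (Fin n), mono m w * ∏ p ∈ P, FF w p

theorem mono_mul_eq (m m' : Fin n → ℤ) (w τ : Equiv.Perm (Fin n))
    (h : ∀ i, m i = m' (τ i)) : mono m (w * τ) = mono m' w :=
  Fintype.prod_equiv τ _ _ fun x => by rw [Equiv.Perm.mul_apply, h x]

theorem mono_addDelta (m : Fin n → ℤ) (r : Fin n) (w : Equiv.Perm (Fin n)) :
    mono (addDelta m r) w = Xv (w r) * mono m w := by
  unfold mono addDelta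
  rw [← Finset.mul_prod_erase Finset.univ _ (Finset.mem_univ r),
      ← Finset.mul_prod_erase Finset.univ (fun i => Xv (w i) ^ (m i)) (Finset.mem_univ r),
      ← mul_assoc]
  congr 1
  · rw [if_pos rfl, zpow_add_one₀ (Xv_ne_zero _)]
    ring
  · exact Finset.prod_congr rfl fun i hi => by
      rw [if_neg (Finset.mem_erase.mp hi).1, add_zero]

theorem SS_reindex (m : Fin n → ℤ) (P : Finset (Fin n × Fin n)) (τ : Equiv.Perm (Fin n)) :
    SS m P = ∑ w : Equiv.Perm (Fin n), mono m (w * τ) * ∏ p ∈ P, FF (w * τ) p :=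
  (Fintype.sum_equiv (Equiv.mulRight τ) _ _ fun w => rfl).symm

theorem swap_fix_of_not_mem {A : Finset (Fin n)} {a b x : Fin n}
    (ha : a ∈ A) (hb : b ∈ A) (hx : x ∉ A) : Equiv.swap a b x = x :=
  Equiv.swap_apply_of_ne_of_ne (fun h => hx (h ▸ ha)) (fun h => hx (h ▸ hb))

theorem swap_mem_iff {A : Finset (Fin n)} {a b : Fin n} (ha : a ∈ A) (hb : b ∈ A) (x : Fin n) :
    Equiv.swap a b x ∈ A ↔ x ∈ A := by
  rcases eq_or_ne x a with rfl | hxa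
  · simp [Equiv.swap_apply_left, ha, hb]
  rcases eq_or_ne x b with rfl | hxb
  · simp [Equiv.swap_apply_right, ha, hb]
  · rw [Equiv.swap_apply_of_ne_of_ne hxa hxb]

/-- M1': swapping two members of the zero block leaves the pair-product unchanged. -/
theorem prod_PZ_swap_mem (A : Finset (Fin n))
    (hiso : ∀ i, i ∉ A → (∀ t ∈ A, i < t) ∨ (∀ t ∈ A, t < i))
    {a b : Fin n} (ha : a ∈ A) (hb : b ∈ A) (w : Equiv.Perm (Fin n)) :
    ∏ p ∈ PZ A, FF (w * Equiv.swap a b) p = ∏ p ∈ PZ A, FF w p := by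
  have sorted : ∀ p ∈ PZ A, Equiv.swap a b p.1 < Equiv.swap a b p.2 := by
    intro p hp
    obtain ⟨hlt, hnb⟩ := (Finset.mem_filter.mp hp).2
    by_cases h1 : p.1 ∈ A
    · have h2 : p.2 ∉ A := fun h => hnb ⟨h1, h⟩
      rw [swap_fix_of_not_mem ha hb h2]
      rcases hiso p.2 h2 with h | h
      · exact absurd (h p.1 h1) (lt_asymm hlt)
      · exact h _ ((swap_mem_iff ha hb p.1).mpr h1)
    · rw [swap_fix_of_not_mem ha hb h1]
      by_cases h2 : p.2 ∈ A
      · rcases hiso p.1 h1 with h | h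
        · exact h _ ((swap_mem_iff ha hb p.2).mpr h2)
        · exact absurd (h p.2 h2) (lt_asymm hlt)
      · rw [swap_fix_of_not_mem ha hb h2]
        exact hlt
  have memPZ : ∀ p ∈ PZ A, (Equiv.swap a b p.1, Equiv.swap a b p.2) ∈ PZ A := by
    intro p hp
    obtain ⟨hlt, hnb⟩ := (Finset.mem_filter.mp hp).2
    refine Finset.mem_filter.mpr ⟨Finset.mem_univ _, sorted p hp, fun hc => hnb ?_⟩
    exact ⟨(swap_mem_iff ha hb p.1).mp hc.1, (swap_mem_iff ha hb p.2).mp hc.2⟩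
  refine Finset.prod_nbij' (fun p => (Equiv.swap a b p.1, Equiv.swap a b p.2))
    (fun p => (Equiv.swap a b p.1, Equiv.swap a b p.2)) memPZ memPZ ?_ ?_ ?_
  · intro p _; simp
  · intro p _; simp
  · intro p _; rw [FF_mul]


/-- M2: swapping two adjacent non-members flips the sign of the pair-product. -/
theorem prod_PZ_swap_adj (A : Finset (Fin n)) {s r : Fin n}
    (hs : s ∉ A) (hr : r ∉ A) (hsr : s < r) (hadj : ∀ t : Fin n, s < t → t < r → False)
    (w : Equiv.Perm (Fin n)) :
    ∏ p ∈ PZ A, FF (w * Equiv.swap s r) p = - ∏ p ∈ PZ A, FF w p := by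
  have hmem : ∀ x : Fin n, Equiv.swap s r x ∈ A ↔ x ∈ A := by
    intro x
    rcases eq_or_ne x s with rfl | hxs
    · simp [Equiv.swap_apply_left, hs, hr]
    rcases eq_or_ne x r with rfl | hxr
    · simp [Equiv.swap_apply_right, hs, hr]
    · rw [Equiv.swap_apply_of_ne_of_ne hxs hxr]
  have hsrP : ((s, r) : Fin n × Fin n) ∈ PZ A :=
    Finset.mem_filter.mpr ⟨Finset.mem_univ _, hsr, fun hc => hs hc.1⟩
  rw [← Finset.mul_prod_erase (PZ A) _ hsrP, ← Finset.mul_prod_erase (PZ A) (FF w) hsrP]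
  have head : FF (w * Equiv.swap s r) (s, r) = - FF w (s, r) := by
    rw [FF_mul]
    simp only [Equiv.swap_apply_left, Equiv.swap_apply_right]
    exact FF_symm w s r
  rw [head, neg_mul, neg_inj]
  congr 1
  -- tail product over the erase set
  have key : ∀ p ∈ (PZ A).erase (s, r),
      (Equiv.swap s r p.1, Equiv.swap s r p.2) ∈ (PZ A).erase (s, r) := by
    rintro ⟨q1, q2⟩ hp
    obtain ⟨hne, hpPZ⟩ := Finset.mem_erase.mp hp
    obtain ⟨hlt, hnb⟩ := (Finset.mem_filter.mp hpPZ).2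
    simp only at hlt hnb ⊢
    have sorted : Equiv.swap s r q1 < Equiv.swap s r q2 := by
      by_cases h1s : q1 = s
      · have h2r : q2 ≠ r := fun h => hne (by rw [h1s, h])
        have h2s : q2 ≠ s := by rw [← h1s]; exact ne_of_gt hlt
        have hq2 : r < q2 := by
          rcases lt_or_gt_of_ne h2r with h | h
          · exact absurd h fun hh => hadj q2 (h1s ▸ hlt) hh
          · exact h
        rw [h1s, Equiv.swap_apply_left, Equiv.swap_apply_of_ne_of_ne h2s h2r]
        exact hq2
      by_cases h1r : q1 = r
      · have h2 : r < q2 := h1r ▸ hlt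
        have h2s : q2 ≠ s := ne_of_gt (hsr.trans h2)
        have h2r : q2 ≠ r := ne_of_gt h2
        rw [h1r, Equiv.swap_apply_right, Equiv.swap_apply_of_ne_of_ne h2s h2r]
        exact hsr.trans h2
      by_cases h2s : q2 = s
      · rw [h2s, Equiv.swap_apply_left, Equiv.swap_apply_of_ne_of_ne h1s h1r]
        exact (h2s ▸ hlt).trans hsr
      by_cases h2r : q2 = r
      · have hq1 : q1 < s := by
          rcases lt_or_gt_of_ne h1s with h | h
          · exact h
          · exact absurd (h2r ▸ hlt) (not_lt.mpr (le_of_lt (lt_of_not_ge fun hc => hadj q1 h (lt_of_not_ge fun hcc => (hadj q1 h (h2r ▸ hlt))))))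
        rw [h2r, Equiv.swap_apply_right, Equiv.swap_apply_of_ne_of_ne h1s h1r]
        exact hq1
      · rw [Equiv.swap_apply_of_ne_of_ne h1s h1r, Equiv.swap_apply_of_ne_of_ne h2s h2r]
        exact hlt
    refine Finset.mem_erase.mpr ⟨?_, Finset.mem_filter.mpr ⟨Finset.mem_univ _, sorted, ?_⟩⟩
    · intro hc
      have e1 : Equiv.swap s r q1 = s := congrArg Prod.fst hc
      have hq1r : q1 = r := by
        have h := congrArg (Equiv.swap s r) e1
        rwa [Equiv.swap_apply_self, Equiv.swap_apply_left] at h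
      have e2 : Equiv.swap s r q2 = r := congrArg Prod.snd hc
      have hq2s : q2 = s := by
        have h := congrArg (Equiv.swap s r) e2
        rwa [Equiv.swap_apply_self, Equiv.swap_apply_right] at h
      rw [hq1r, hq2s] at hlt
      exact absurd hlt (not_lt.mpr (le_of_lt hsr))
    · intro hc
      exact hnb ⟨(hmem q1).mp hc.1, (hmem q2).mp hc.2⟩
  refine Finset.prod_nbij' (fun p => (Equiv.swap s r p.1, Equiv.swap s r p.2))
    (fun p => (Equiv.swap s r p.1, Equiv.swap s r p.2)) key key ?_ ?_ ?_
  · intro p _; simp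
  · intro p _; simp
  · intro p _; rw [FF_mul]

/-- vanishing via an adjacent swap fixing the exponents. -/
theorem SS_vanish (m : Fin n → ℤ) (A : Finset (Fin n)) {s r : Fin n}
    (hs : s ∉ A) (hr : r ∉ A) (hsr : s < r) (hadj : ∀ t : Fin n, s < t → t < r → False)
    (hm : ∀ i, m i = m (Equiv.swap s r i)) :
    SS m (PZ A) = 0 := by
  have h1 : SS m (PZ A) = - SS m (PZ A) := by
    calc SS m (PZ A)
        = ∑ w : Equiv.Perm (Fin n), mono m (w * Equiv.swap s r) *
            ∏ p ∈ PZ A, FF (w * Equiv.swap s r) p := SS_reindex m (PZ A) _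
      _ = ∑ w : Equiv.Perm (Fin n), mono m w * -∏ p ∈ PZ A, FF w p := by
          apply Finset.sum_congr rfl
          intro w _
          rw [mono_mul_eq m m w _ hm, prod_PZ_swap_adj A hs hr hsr hadj]
      _ = - SS m (PZ A) := by
          unfold SS
          rw [← Finset.sum_neg_distrib]
          exact Finset.sum_congr rfl fun w _ => by ring
  have := add_eq_zero_iff_eq_neg.mpr h1
  have h2 : (2 : K n) * SS m (PZ A) = 0 := by linear_combination this
  rcases mul_eq_zero.mp h2 with h | h
  · exact absurd h two_ne_zero
  · exact h


theorem prod_PZ_erase (A : Finset (Fin n)) {r0 : Fin n} (hr0 : r0 ∈ A)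
    (hmin : ∀ t ∈ A, t ≠ r0 → r0 < t) (f : Fin n × Fin n → K n) :
    ∏ p ∈ PZ (A.erase r0), f p = (∏ p ∈ PZ A, f p) * ∏ t ∈ A.erase r0, f (r0, t) := by
  have hset : PZ (A.erase r0) = PZ A ∪ (A.erase r0).image (fun t => (r0, t)) := by
    ext ⟨a, b⟩
    simp only [PZ, Finset.mem_filter, Finset.mem_univ, true_and, Finset.mem_union,
      Finset.mem_image, Finset.mem_erase]
    constructor
    · rintro ⟨hab, hnb⟩
      by_cases hA : a ∈ A ∧ b ∈ A
      · have hbr : b ≠ r0 := by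
          intro hb
          have haA : a ≠ r0 := by intro ha; rw [ha, hb] at hab; exact lt_irrefl _ hab
          exact absurd (hmin a hA.1 haA) (not_lt.mpr (le_of_lt (hb ▸ hab)))
        have har : a = r0 := by
          by_contra ha
          exact hnb ⟨⟨ha, hA.1⟩, ⟨hbr, hA.2⟩⟩
        exact Or.inr ⟨b, ⟨hbr, hA.2⟩, by rw [har]⟩
      · exact Or.inl ⟨hab, fun hc => hA ⟨hc.1, hc.2⟩⟩
    · rintro (⟨hab, hnb⟩ | ⟨t, ⟨htr, htA⟩, heq⟩)
      · exact ⟨hab, fun hc => hnb ⟨hc.1.2, hc.2.2⟩⟩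
      · cases heq
        exact ⟨hmin _ htA htr, fun hc => hc.1.1 rfl⟩
  have hdisj : Disjoint (PZ A) ((A.erase r0).image (fun t => (r0, t))) := by
    rw [Finset.disjoint_right]
    intro p hp hpPZ
    obtain ⟨t, htm, heq⟩ := Finset.mem_image.mp hp
    obtain ⟨_, hnb⟩ := (Finset.mem_filter.mp hpPZ).2
    cases heq
    exact hnb ⟨hr0, (Finset.mem_erase.mp htm).2⟩
  rw [hset, Finset.prod_union hdisj, Finset.prod_image fun x _ y _ h => (Prod.mk.injEq .. ▸ h).2]

theorem prod_PZ_insert (A : Finset (Fin n)) {r : Fin n} (hr : r ∉ A)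
    (hmax : ∀ i ∈ A, i < r) (f : Fin n × Fin n → K n) :
    ∏ p ∈ PZ A, f p = (∏ p ∈ PZ (insert r A), f p) * ∏ i ∈ A, f (i, r) := by
  have hset : PZ A = PZ (insert r A) ∪ A.image (fun i => (i, r)) := by
    ext ⟨a, b⟩
    simp only [PZ, Finset.mem_filter, Finset.mem_univ, true_and, Finset.mem_union,
      Finset.mem_image, Finset.mem_insert]
    constructor
    · rintro ⟨hab, hnb⟩
      by_cases hA : (a = r ∨ a ∈ A) ∧ (b = r ∨ b ∈ A)
      · rcases hA.1 with ha | ha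
        · exfalso
          rcases hA.2 with hb | hb
          · rw [ha, hb] at hab; exact lt_irrefl _ hab
          · rw [ha] at hab; exact absurd (hmax b hb) (not_lt.mpr (le_of_lt hab))
        · rcases hA.2 with hb | hb
          · exact Or.inr ⟨a, ha, by rw [hb]⟩
          · exact absurd ⟨ha, hb⟩ hnb
      · exact Or.inl ⟨hab, hA⟩
    · rintro (⟨hab, hnb⟩ | ⟨i, hiA, heq⟩)
      · exact ⟨hab, fun hc => hnb ⟨Or.inr hc.1, Or.inr hc.2⟩⟩
      · cases heq
        exact ⟨hmax _ hiA, fun hc => hr hc.2⟩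
  have hdisj : Disjoint (PZ (insert r A)) (A.image (fun i => (i, r))) := by
    rw [Finset.disjoint_right]
    intro p hp hpPZ
    obtain ⟨i, hiA, heq⟩ := Finset.mem_image.mp hp
    obtain ⟨_, hnb⟩ := (Finset.mem_filter.mp hpPZ).2
    cases heq
    exact hnb ⟨Finset.mem_insert_of_mem hiA, Finset.mem_insert_self r A⟩
  rw [hset, Finset.prod_union hdisj, Finset.prod_image fun x _ y _ h => (Prod.mk.injEq .. ▸ h).1]

theorem prod_erase_swap (A : Finset (Fin n)) {a k : Fin n} (ha : a ∈ A) (hk : k ∈ A)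
    (g : Fin n → K n) :
    ∏ t ∈ A.erase a, g (Equiv.swap a k t) = ∏ t ∈ A.erase k, g t := by
  refine Finset.prod_nbij' (fun t => Equiv.swap a k t) (fun t => Equiv.swap a k t) ?_ ?_ ?_ ?_ ?_
  · intro t ht
    obtain ⟨hta, htA⟩ := Finset.mem_erase.mp ht
    refine Finset.mem_erase.mpr ⟨?_, (swap_mem_iff ha hk t).mpr htA⟩
    intro hc
    apply hta
    have := congrArg (Equiv.swap a k) hc
    rwa [Equiv.swap_apply_self, Equiv.swap_apply_right] at this
  · intro t ht
    obtain ⟨htk, htA⟩ := Finset.mem_erase.mp ht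
    refine Finset.mem_erase.mpr ⟨?_, (swap_mem_iff ha hk t).mpr htA⟩
    intro hc
    apply htk
    have := congrArg (Equiv.swap a k) hc
    rwa [Equiv.swap_apply_self, Equiv.swap_apply_left] at this
  · intro t _; simp
  · intro t _; simp
  · intro t _; rfl

theorem prod_swap_insert (A : Finset (Fin n)) {r k : Fin n} (hr : r ∉ A)
    (hk : k ∈ insert r A) (g : Fin n → K n) :
    ∏ i ∈ A, g (Equiv.swap k r i) = ∏ t ∈ (insert r A).erase k, g t := by
  refine Finset.prod_nbij' (fun t => Equiv.swap k r t) (fun t => Equiv.swap k r t) ?_ ?_ ?_ ?_ ?_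
  · intro i hiA
    by_cases hik : i = k
    · rw [hik, Equiv.swap_apply_left]
      refine Finset.mem_erase.mpr ⟨fun hc => hr (hc ▸ hik ▸ hiA), Finset.mem_insert_self r A⟩
    · have hir : i ≠ r := fun hc => hr (hc ▸ hiA)
      rw [Equiv.swap_apply_of_ne_of_ne hik hir]
      exact Finset.mem_erase.mpr ⟨hik, Finset.mem_insert_of_mem hiA⟩
  · intro t ht
    obtain ⟨htk, htA'⟩ := Finset.mem_erase.mp ht
    by_cases htr : t = r
    · rw [htr, Equiv.swap_apply_right]
      rcases Finset.mem_insert.mp hk with hkr | hkA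
      · exact absurd (hkr ▸ htr ▸ htk) (fun hc => hc rfl)
      · exact hkA
    · rw [Equiv.swap_apply_of_ne_of_ne htk htr]
      rcases Finset.mem_insert.mp htA' with h | h
      · exact absurd h htr
      · exact h
  · intro t _; simp
  · intro t _; simp
  · intro t _; rfl

theorem step1 (m : Fin n → ℤ) (P : Finset (Fin n × Fin n)) :
    (∑ i, Xv i) * SS m P = ∑ r : Fin n, SS (addDelta m r) P := by
  unfold SS
  rw [Finset.mul_sum]
  have h1 : ∀ w : Equiv.Perm (Fin n),
      (∑ i, Xv i) * (mono m w * ∏ p ∈ P, FF w p)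
        = ∑ r : Fin n, mono (addDelta m r) w * ∏ p ∈ P, FF w p := by
    intro w
    have h0 : (∑ i, Xv i : K n) = ∑ r, Xv (w r) := (Equiv.sum_comp w (fun i => Xv i)).symm
    rw [h0, Finset.sum_mul]
    exact Finset.sum_congr rfl fun r _ => by rw [mono_addDelta, mul_assoc]
  rw [Finset.sum_congr rfl fun w _ => h1 w]
  exact Finset.sum_comm


/-- the zero set of `l`. -/
def ZB (l : Fin n → ℤ) : Finset (Fin n) := Finset.univ.filter fun r => l r = 0

theorem lv_lt {l : Fin n → ℤ} (hl : ZPlus l) {i j : Fin n} (h : l j < l i) : i < j :=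
  lt_of_not_ge fun hc => absurd (hl.1 hc) (not_le.mpr h)

theorem comp_swap (m : Fin n → ℤ) {a b : Fin n} (hab : m a = m b) (i : Fin n) :
    m i = m (Equiv.swap a b i) := by
  rcases eq_or_ne i a with rfl | hia
  · rw [Equiv.swap_apply_left]; exact hab
  rcases eq_or_ne i b with rfl | hib
  · rw [Equiv.swap_apply_right]; exact hab.symm
  · rw [Equiv.swap_apply_of_ne_of_ne hia hib]

theorem addDelta_swap (l : Fin n → ℤ) {a b : Fin n} (hab : l a = l b) (i : Fin n) :
    addDelta l a i = addDelta l b (Equiv.swap a b i) := by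
  unfold addDelta
  rcases eq_or_ne a b with rfl | hab'
  · simp
  rcases eq_or_ne i a with rfl | hia
  · rw [Equiv.swap_apply_left, if_pos rfl, if_pos rfl, hab]
  rcases eq_or_ne i b with rfl | hib
  · rw [Equiv.swap_apply_right, if_neg hia, if_neg hab', hab]
  · rw [Equiv.swap_apply_of_ne_of_ne hia hib, if_neg hia, if_neg hib]

theorem mem_ZB {l : Fin n → ℤ} {t : Fin n} : t ∈ ZB l ↔ l t = 0 := by
  simp [ZB]

theorem ZB_iso {l : Fin n → ℤ} (hl : ZPlus l) :
    ∀ i, i ∉ ZB l → (∀ t ∈ ZB l, i < t) ∨ (∀ t ∈ ZB l, t < i) := by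
  intro i hi
  have hne : l i ≠ 0 := fun h => hi (mem_ZB.mpr h)
  rcases lt_or_gt_of_ne hne with h | h
  · right; intro t ht
    exact lv_lt hl (by rw [mem_ZB.mp ht]; exact h)
  · left; intro t ht
    exact lv_lt hl (by rw [mem_ZB.mp ht]; exact h)

/-- Case (a): the zero-block contributions. -/
theorem caseA (l : Fin n → ℤ) (hl : ZPlus l) (hz : (ZB l).Nonempty) :
    (ZB l).card • SS (addDelta l ((ZB l).min' hz)) (PZ ((ZB l).erase ((ZB l).min' hz)))
      = ∑ k ∈ ZB l, SS (addDelta l k) (PZ (ZB l)) := by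
  set r0 := (ZB l).min' hz with hr0def
  have hr0 : r0 ∈ ZB l := Finset.min'_mem _ _
  have hmin : ∀ t ∈ ZB l, t ≠ r0 → r0 < t := fun t ht hne =>
    lt_of_le_of_ne (Finset.min'_le _ _ ht) (Ne.symm hne)
  have key : ∀ k ∈ ZB l, SS (addDelta l r0) (PZ ((ZB l).erase r0))
      = ∑ w : Equiv.Perm (Fin n), (Xv (w k) * mono l w) *
          ((∏ p ∈ PZ (ZB l), FF w p) * ∏ t ∈ (ZB l).erase k, FF w (k, t)) := by
    intro k hk
    rw [SS_reindex _ _ (Equiv.swap r0 k)]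
    apply Finset.sum_congr rfl
    intro w _
    have hmono : mono (addDelta l r0) (w * Equiv.swap r0 k) = Xv (w k) * mono l w := by
      rw [mono_mul_eq (addDelta l r0) (addDelta l k) w (Equiv.swap r0 k)
        (addDelta_swap l (by rw [mem_ZB.mp hr0, mem_ZB.mp hk])), mono_addDelta]
    have hprod : ∏ p ∈ PZ ((ZB l).erase r0), FF (w * Equiv.swap r0 k) p
        = (∏ p ∈ PZ (ZB l), FF w p) * ∏ t ∈ (ZB l).erase k, FF w (k, t) := by
      rw [prod_PZ_erase (ZB l) hr0 hmin (FF (w * Equiv.swap r0 k))]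
      congr 1
      · exact prod_PZ_swap_mem (ZB l) (ZB_iso hl) hr0 hk w
      · have h1 : ∀ t, FF (w * Equiv.swap r0 k) (r0, t) = FF w (k, Equiv.swap r0 k t) := by
          intro t; rw [FF_mul]; simp [Equiv.swap_apply_left]
        rw [Finset.prod_congr rfl fun t _ => h1 t]
        exact prod_erase_swap (ZB l) hr0 hk (fun t => FF w (k, t))
    rw [hmono, hprod]
  calc (ZB l).card • SS (addDelta l r0) (PZ ((ZB l).erase r0))
      = ∑ k ∈ ZB l, SS (addDelta l r0) (PZ ((ZB l).erase r0)) := by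
        rw [Finset.sum_const]
    _ = ∑ k ∈ ZB l, ∑ w : Equiv.Perm (Fin n), (Xv (w k) * mono l w) *
          ((∏ p ∈ PZ (ZB l), FF w p) * ∏ t ∈ (ZB l).erase k, FF w (k, t)) :=
        Finset.sum_congr rfl key
    _ = ∑ w : Equiv.Perm (Fin n), ∑ k ∈ ZB l, (Xv (w k) * mono l w) *
          ((∏ p ∈ PZ (ZB l), FF w p) * ∏ t ∈ (ZB l).erase k, FF w (k, t)) :=
        Finset.sum_comm
    _ = ∑ w : Equiv.Perm (Fin n), ∑ k ∈ ZB l, (Xv (w k) * mono l w) *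
          (∏ p ∈ PZ (ZB l), FF w p) := by
        apply Finset.sum_congr rfl
        intro w _
        have hinj : Set.InjOn (fun t => Xv (w t)) (ZB l) := fun i _ j _ h =>
          w.injective (Xv_injective h)
        have hid := id2 (ZB l) (fun t => Xv (w t)) hinj
        calc ∑ k ∈ ZB l, (Xv (w k) * mono l w) *
              ((∏ p ∈ PZ (ZB l), FF w p) * ∏ t ∈ (ZB l).erase k, FF w (k, t))
            = (mono l w * ∏ p ∈ PZ (ZB l), FF w p) *
              ∑ k ∈ ZB l, Xv (w k) * ∏ t ∈ (ZB l).erase k,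
                ((Xv (w k) + Xv (w t)) / (Xv (w k) - Xv (w t))) := by
              rw [Finset.mul_sum]
              apply Finset.sum_congr rfl
              intro k _
              unfold FF
              ring
          _ = (mono l w * ∏ p ∈ PZ (ZB l), FF w p) * ∑ k ∈ ZB l, Xv (w k) := by
              rw [hid]
          _ = ∑ k ∈ ZB l, (Xv (w k) * mono l w) * (∏ p ∈ PZ (ZB l), FF w p) := by
              rw [Finset.mul_sum]
              apply Finset.sum_congr rfl
              intro k _
              ring
    _ = ∑ k ∈ ZB l, ∑ w : Equiv.Perm (Fin n), (Xv (w k) * mono l w) *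
          (∏ p ∈ PZ (ZB l), FF w p) := Finset.sum_comm
    _ = ∑ k ∈ ZB l, SS (addDelta l k) (PZ (ZB l)) := by
        apply Finset.sum_congr rfl
        intro k _
        unfold SS
        exact Finset.sum_congr rfl fun w _ => by rw [mono_addDelta]

/-- Case (b): the `-1` entry contribution. -/
theorem caseB (l : Fin n → ℤ) (hl : ZPlus l) {r : Fin n} (hlr : l r = -1) :
    (insert r (ZB l)).card • SS (addDelta l r) (PZ (ZB l))
      = (if Even (ZB l).card then 1 else 0) * SS (addDelta l r) (PZ (insert r (ZB l))) := by
  have hrZ : r ∉ ZB l := fun h => by rw [mem_ZB.mp h] at hlr; exact absurd hlr (by norm_num)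
  have hmax : ∀ i ∈ ZB l, i < r := fun i hi =>
    lv_lt hl (by rw [mem_ZB.mp hi, hlr]; norm_num)
  have hiso' : ∀ i, i ∉ insert r (ZB l) →
      (∀ t ∈ insert r (ZB l), i < t) ∨ (∀ t ∈ insert r (ZB l), t < i) := by
    intro i hi
    have hir : i ≠ r := fun h => hi (Finset.mem_insert.mpr (Or.inl h))
    have hi0 : l i ≠ 0 := fun h => hi (Finset.mem_insert_of_mem (mem_ZB.mpr h))
    have hi1 : l i ≠ -1 := by
      intro h
      rcases lt_or_gt_of_ne hir with hlt | hlt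
      · exact absurd (hl.2 i r hlt (by rw [h, hlr])) (by rw [h]; norm_num)
      · exact absurd (hl.2 r i hlt (by rw [h, hlr])) (by rw [hlr]; norm_num)
    have hval : ∀ t ∈ insert r (ZB l), -1 ≤ l t ∧ l t ≤ 0 := by
      intro t ht
      rcases Finset.mem_insert.mp ht with rfl | htZ
      · rw [hlr]; norm_num
      · rw [mem_ZB.mp htZ]; norm_num
    rcases lt_or_gt_of_ne hi0 with h | h
    · have h2 : l i < -1 := lt_of_le_of_ne (by omega) hi1
      right; intro t ht
      exact lv_lt hl (lt_of_lt_of_le h2 (hval t ht).1)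
    · left; intro t ht
      exact lv_lt hl (lt_of_le_of_lt (hval t ht).2 h)
  have hmu : addDelta l r r = 0 := by unfold addDelta; rw [if_pos rfl, hlr]; norm_num
  have key : ∀ k ∈ insert r (ZB l), SS (addDelta l r) (PZ (ZB l))
      = ∑ w : Equiv.Perm (Fin n), mono (addDelta l r) w *
          ((∏ p ∈ PZ (insert r (ZB l)), FF w p) *
            ∏ t ∈ (insert r (ZB l)).erase k, FF w (t, k)) := by
    intro k hk
    rw [SS_reindex _ _ (Equiv.swap k r)]
    apply Finset.sum_congr rfl
    intro w _
    have hmuk : addDelta l r k = addDelta l r r := by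
      rcases Finset.mem_insert.mp hk with rfl | hkZ
      · rfl
      · rw [hmu]
        unfold addDelta
        rw [if_neg (fun h : k = r => hrZ (by rwa [h] at hkZ)), mem_ZB.mp hkZ]
        norm_num
    have hmono : mono (addDelta l r) (w * Equiv.swap k r) = mono (addDelta l r) w :=
      mono_mul_eq _ _ w (Equiv.swap k r) (comp_swap _ hmuk)
    have hprod : ∏ p ∈ PZ (ZB l), FF (w * Equiv.swap k r) p
        = (∏ p ∈ PZ (insert r (ZB l)), FF w p) *
            ∏ t ∈ (insert r (ZB l)).erase k, FF w (t, k) := by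
      rw [prod_PZ_insert (ZB l) hrZ hmax (FF (w * Equiv.swap k r))]
      congr 1
      · exact prod_PZ_swap_mem (insert r (ZB l)) hiso' hk (Finset.mem_insert_self r _) w
      · have h1 : ∀ i, FF (w * Equiv.swap k r) (i, r) = FF w (Equiv.swap k r i, k) := by
          intro i; rw [FF_mul]; simp [Equiv.swap_apply_right]
        rw [Finset.prod_congr rfl fun i _ => h1 i]
        exact prod_swap_insert (ZB l) hrZ hk (fun t => FF w (t, k))
    rw [hmono, hprod]
  calc (insert r (ZB l)).card • SS (addDelta l r) (PZ (ZB l))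
      = ∑ k ∈ insert r (ZB l), SS (addDelta l r) (PZ (ZB l)) := by rw [Finset.sum_const]
    _ = ∑ k ∈ insert r (ZB l), ∑ w : Equiv.Perm (Fin n), mono (addDelta l r) w *
          ((∏ p ∈ PZ (insert r (ZB l)), FF w p) *
            ∏ t ∈ (insert r (ZB l)).erase k, FF w (t, k)) := Finset.sum_congr rfl key
    _ = ∑ w : Equiv.Perm (Fin n), ∑ k ∈ insert r (ZB l), mono (addDelta l r) w *
          ((∏ p ∈ PZ (insert r (ZB l)), FF w p) *
            ∏ t ∈ (insert r (ZB l)).erase k, FF w (t, k)) := Finset.sum_comm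
    _ = ∑ w : Equiv.Perm (Fin n), (if Even (ZB l).card then 1 else 0) *
          (mono (addDelta l r) w * ∏ p ∈ PZ (insert r (ZB l)), FF w p) := by
        apply Finset.sum_congr rfl
        intro w _
        have hinj : Set.InjOn (fun t => Xv (w t)) (↑(insert r (ZB l)) : Set (Fin n)) :=
          fun i _ j _ h => w.injective (Xv_injective h)
        have hy0 : ∀ i ∈ insert r (ZB l), Xv (w i) ≠ 0 := fun i _ => Xv_ne_zero _
        have hid := id1' (insert r (ZB l)) (fun t => Xv (w t)) hinj hy0
        have hcardins : #(insert r (ZB l)) = #(ZB l) + 1 := Finset.card_insert_of_notMem hrZ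
        calc ∑ k ∈ insert r (ZB l), mono (addDelta l r) w *
              ((∏ p ∈ PZ (insert r (ZB l)), FF w p) *
                ∏ t ∈ (insert r (ZB l)).erase k, FF w (t, k))
            = (mono (addDelta l r) w * ∏ p ∈ PZ (insert r (ZB l)), FF w p) *
              ∑ k ∈ insert r (ZB l), ∏ t ∈ (insert r (ZB l)).erase k,
                ((Xv (w t) + Xv (w k)) / (Xv (w t) - Xv (w k))) := by
              rw [Finset.mul_sum]
              apply Finset.sum_congr rfl
              intro k _
              unfold FF
              ring
          _ = (mono (addDelta l r) w * ∏ p ∈ PZ (insert r (ZB l)), FF w p) *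
              (if Even #(insert r (ZB l)) then 0 else 1) := by rw [hid]
          _ = (if Even (ZB l).card then 1 else 0) *
              (mono (addDelta l r) w * ∏ p ∈ PZ (insert r (ZB l)), FF w p) := by
              by_cases h : Even #(ZB l) <;>
                simp [hcardins, Nat.even_add_one, h, mul_comm]
    _ = (if Even (ZB l).card then 1 else 0) * SS (addDelta l r) (PZ (insert r (ZB l))) := by
        rw [← Finset.mul_sum]
        rfl


theorem stab_card (m : Fin n → ℤ) (hm : ZPlus m) :
    (Finset.univ.filter fun w : Equiv.Perm (Fin n) => ∀ t, m (w t) = m t).card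
      = (zcount m).factorial := by
  have hiff : ∀ w : Equiv.Perm (Fin n),
      (∀ t, m (w t) = m t) ↔ (∀ t, ¬ m t = 0 → w t = t) := by
    intro w
    constructor
    · intro h t ht
      by_contra hne
      rcases lt_or_gt_of_ne hne with hlt | hlt
      · exact ht (by rw [← h t]; exact hm.2 (w t) t hlt (h t))
      · exact ht (hm.2 t (w t) hlt (h t).symm)
    · intro h t
      by_cases ht : m t = 0
      · have hwt : m (w t) = 0 := by
          by_contra hc
          have h2 := h (w t) hc
          have h3 := w.injective h2
          rw [h3] at hc
          exact hc ht
        rw [hwt, ht]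
      · rw [h t ht]
  rw [Finset.filter_congr fun w _ => hiff w]
  have h1 : (Finset.univ.filter fun w : Equiv.Perm (Fin n) => ∀ t, ¬ m t = 0 → w t = t).card
      = Fintype.card {w : Equiv.Perm (Fin n) // ∀ t, ¬ m t = 0 → w t = t} :=
    (Fintype.card_subtype _).symm
  rw [h1, Fintype.card_congr (Equiv.Perm.subtypeEquivSubtypePerm (fun t => m t = 0)).symm,
    Fintype.card_perm, Fintype.card_subtype]
  rfl

theorem PP_eq_PZ (m : Fin n → ℤ) (hm : ZPlus m) :
    (Finset.univ.filter fun p : Fin n × Fin n => p.1 < p.2 ∧ m p.2 < m p.1) = PZ (ZB m) := by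
  ext ⟨a, b⟩
  simp only [PZ, ZB, Finset.mem_filter, Finset.mem_univ, true_and]
  constructor
  · rintro ⟨hab, hv⟩
    exact ⟨hab, fun hc => absurd hv (by rw [hc.1, hc.2]; exact lt_irrefl 0)⟩
  · rintro ⟨hab, hnb⟩
    refine ⟨hab, ?_⟩
    rcases lt_or_eq_of_le (hm.1 (le_of_lt hab)) with h | h
    · exact h
    · exfalso
      have h0 : m a = 0 := hm.2 a b hab h.symm
      exact hnb ⟨h0, h.trans h0⟩

theorem schurP_eq (m : Fin n → ℤ) (hm : ZPlus m) :
    schurP m = (((ZB m).card).factorial : K n)⁻¹ * SS m (PZ (ZB m)) := by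
  unfold schurP
  rw [stab_card m hm, PP_eq_PZ m hm]
  rfl

theorem addDelta_val_neg (l : Fin n → ℤ) {r : Fin n} (hlr : l r = -1) (t : Fin n) :
    addDelta l r t = if t = r then 0 else l t := by
  unfold addDelta
  by_cases h : t = r <;> simp [h, hlr]

theorem addDelta_val (l : Fin n → ℤ) (r : Fin n) (t : Fin n) :
    addDelta l r t = if t = r then l r + 1 else l t := by
  unfold addDelta
  by_cases h : t = r <;> simp [h]

theorem ZB_addDelta_neg (l : Fin n → ℤ) {r : Fin n} (hlr : l r = -1) :
    ZB (addDelta l r) = insert r (ZB l) := by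
  ext t
  simp only [ZB, Finset.mem_filter, Finset.mem_univ, true_and, Finset.mem_insert,
    addDelta_val_neg l hlr]
  by_cases h : t = r <;> simp [h]

theorem ZB_addDelta_other (l : Fin n → ℤ) {r : Fin n} (h0 : l r ≠ 0) (h1 : l r ≠ -1) :
    ZB (addDelta l r) = ZB l := by
  ext t
  simp only [ZB, Finset.mem_filter, Finset.mem_univ, true_and, addDelta_val]
  by_cases h : t = r <;> simp [h]
  omega

theorem ZB_addDelta_zero (l : Fin n → ℤ) {r : Fin n} (h0 : l r = 0) :
    ZB (addDelta l r) = (ZB l).erase r := by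
  ext t
  simp only [ZB, Finset.mem_filter, Finset.mem_univ, true_and, Finset.mem_erase, addDelta_val]
  by_cases h : t = r <;> simp [h, h0]

theorem ZPlus_addDelta_neg (l : Fin n → ℤ) (hl : ZPlus l) {r : Fin n} (hlr : l r = -1) :
    ZPlus (addDelta l r) := by
  have hlt : ∀ i, i < r → 0 ≤ l i := by
    intro i hir
    have h1 : l r ≤ l i := hl.1 (le_of_lt hir)
    rcases eq_or_lt_of_le h1 with h | h
    · have := hl.2 i r hir (by omega)
      omega
    · omega
  have hgt : ∀ j, r < j → l j ≤ -2 := by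
    intro j hrj
    have h1 : l j ≤ l r := hl.1 (le_of_lt hrj)
    rcases eq_or_lt_of_le h1 with h | h
    · have := hl.2 r j hrj (by omega)
      omega
    · omega
  constructor
  · intro i j hij
    rcases eq_or_lt_of_le hij with rfl | hij'
    · exact le_refl _
    rw [addDelta_val_neg l hlr, addDelta_val_neg l hlr]
    by_cases hi : i = r
    · have hj : j ≠ r := fun h => by rw [hi, h] at hij'; exact lt_irrefl _ hij'
      rw [if_pos hi, if_neg hj]
      have := hgt j (hi ▸ hij')
      omega
    · rw [if_neg hi]
      by_cases hj : j = r
      · rw [if_pos hj]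
        exact hlt i (hj ▸ hij')
      · rw [if_neg hj]
        exact hl.1 hij
  · intro a b hab heq
    rw [addDelta_val_neg l hlr, addDelta_val_neg l hlr] at heq
    rw [addDelta_val_neg l hlr]
    by_cases ha : a = r
    · rw [if_pos ha]
    · rw [if_neg ha] at heq ⊢
      by_cases hb : b = r
      · rw [if_pos hb] at heq
        exact heq
      · rw [if_neg hb] at heq
        exact hl.2 a b hab heq

theorem ZPlus_addDelta_gen (l : Fin n → ℤ) (hl : ZPlus l) {r : Fin n} (h0 : l r ≠ 0)
    (h1 : l r ≠ -1) (hno : ¬∃ s, l s = l r + 1) : ZPlus (addDelta l r) := by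
  have hlt : ∀ i, i < r → l r + 1 ≤ l i := by
    intro i hir
    have ha : l r ≤ l i := hl.1 (le_of_lt hir)
    rcases eq_or_lt_of_le ha with h | h
    · have := hl.2 i r hir (by omega)
      omega
    · omega
  constructor
  · intro i j hij
    rcases eq_or_lt_of_le hij with rfl | hij'
    · exact le_refl _
    rw [addDelta_val, addDelta_val]
    by_cases hi : i = r
    · have hj : j ≠ r := fun h => by rw [hi, h] at hij'; exact lt_irrefl _ hij'
      rw [if_pos hi, if_neg hj]
      have := hl.1 (le_of_lt (hi ▸ hij'))
      omega
    · rw [if_neg hi]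
      by_cases hj : j = r
      · rw [if_pos hj]
        exact hlt i (hj ▸ hij')
      · rw [if_neg hj]
        exact hl.1 hij
  · intro a b hab heq
    rw [addDelta_val, addDelta_val] at heq
    rw [addDelta_val]
    by_cases ha : a = r
    · rw [if_pos ha] at heq
      have hb : b ≠ r := fun h => by rw [ha, h] at hab; exact lt_irrefl _ hab
      rw [if_neg hb] at heq
      exact absurd ⟨b, heq.symm⟩ hno
    · rw [if_neg ha] at heq ⊢
      by_cases hb : b = r
      · rw [if_pos hb] at heq
        exact absurd ⟨a, heq⟩ hno
      · rw [if_neg hb] at heq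
        exact hl.2 a b hab heq

theorem ZPlus_addDelta_min (l : Fin n → ℤ) (hl : ZPlus l) (hz : (ZB l).Nonempty)
    (hno1 : ¬∃ s, l s = 1) : ZPlus (addDelta l ((ZB l).min' hz)) := by
  set r0 := (ZB l).min' hz with hr0def
  have hr0 : l r0 = 0 := mem_ZB.mp (Finset.min'_mem _ _)
  have hlt : ∀ i, i < r0 → 1 ≤ l i := by
    intro i hir
    have ha : l r0 ≤ l i := hl.1 (le_of_lt hir)
    have hi0 : l i ≠ 0 := by
      intro h
      exact absurd (Finset.min'_le (ZB l) i (mem_ZB.mpr h)) (not_le.mpr hir)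
    omega
  constructor
  · intro i j hij
    rcases eq_or_lt_of_le hij with rfl | hij'
    · exact le_refl _
    rw [addDelta_val, addDelta_val]
    by_cases hi : i = r0
    · have hj : j ≠ r0 := fun h => by rw [hi, h] at hij'; exact lt_irrefl _ hij'
      rw [if_pos hi, if_neg hj]
      have := hl.1 (le_of_lt (hi ▸ hij'))
      rw [hi, hr0] at *
      omega
    · rw [if_neg hi]
      by_cases hj : j = r0
      · rw [if_pos hj, hr0]
        have := hlt i (hj ▸ hij')
        omega
      · rw [if_neg hj]
        exact hl.1 hij
  · intro a b hab heq
    rw [addDelta_val, addDelta_val] at heq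
    rw [addDelta_val]
    by_cases ha : a = r0
    · rw [if_pos ha] at heq
      have hb : b ≠ r0 := fun h => by rw [ha, h] at hab; exact lt_irrefl _ hab
      rw [if_neg hb] at heq
      rw [hr0] at heq
      exact absurd ⟨b, by omega⟩ hno1
    · rw [if_neg ha] at heq ⊢
      by_cases hb : b = r0
      · rw [if_pos hb, hr0] at heq
        exact absurd ⟨a, by omega⟩ hno1
      · rw [if_neg hb] at heq
        exact hl.2 a b hab heq

end Main
end Stmt5Aux


open Stmt5Aux

/-- for `λ ∈ ℤⁿ₊`,
`(x_1+…+x_n)·p_λ = Σ_r p_{λ+δ_r}`, the sum over those `r` with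
`λ+δ_r ∈ ℤⁿ₊` and not both `λ_r = −1` and `z(λ)` odd. -/
theorem stmt5 (n : ℕ) (hn : 1 ≤ n) (l : Fin n → ℤ) (hl : ZPlus l) :
    (∑ i, Xv i) * schurP l =
      ∑ r ∈ Finset.univ.filter (fun r : Fin n =>
          ZPlus (addDelta l r) ∧ ¬(l r = -1 ∧ ¬ Even (zcount l))),
        schurP (addDelta l r) := by
  classical
  have hZBdef : Finset.univ.filter (fun r : Fin n => l r = 0) = ZB l := rfl
  have hzc : zcount l = (ZB l).card := rfl
  rw [schurP_eq l hl, mul_left_comm, step1 l (PZ (ZB l)), Finset.mul_sum, Finset.sum_filter]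
  rw [← Finset.sum_filter_add_sum_filter_not Finset.univ (fun r : Fin n => l r = 0)
        (fun r => (((ZB l).card.factorial : K n))⁻¹ * SS (addDelta l r) (PZ (ZB l))),
      ← Finset.sum_filter_add_sum_filter_not Finset.univ (fun r : Fin n => l r = 0)
        (fun r => if ZPlus (addDelta l r) ∧ ¬(l r = -1 ∧ ¬ Even (zcount l))
          then schurP (addDelta l r) else 0)]
  rw [hZBdef]
  congr 1
  · -- PART 2 : the zero block
    rcases Finset.eq_empty_or_nonempty (ZB l) with he | hz
    · rw [he]; simp
    set r0 := (ZB l).min' hz with hr0def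
    have hr0Z : r0 ∈ ZB l := Finset.min'_mem _ _
    have hl0 : l r0 = 0 := mem_ZB.mp hr0Z
    have hzpos : (ZB l).card ≠ 0 := Finset.card_ne_zero.mpr hz
    have hLHS : ∑ r ∈ ZB l, (((ZB l).card.factorial : K n))⁻¹ * SS (addDelta l r) (PZ (ZB l))
        = (((ZB l).card - 1).factorial : K n)⁻¹ *
            SS (addDelta l r0) (PZ ((ZB l).erase r0)) := by
      rw [← Finset.mul_sum, ← caseA l hl hz, nsmul_eq_mul]
      have hfact : (ZB l).card * ((ZB l).card - 1).factorial = ((ZB l).card).factorial :=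
        Nat.mul_factorial_pred hzpos
      rw [← hfact]
      have h1 : (((ZB l).card : ℕ) : K n) ≠ 0 := Nat.cast_ne_zero.mpr hzpos
      have h2 : ((((ZB l).card - 1).factorial : ℕ) : K n) ≠ 0 :=
        Nat.cast_ne_zero.mpr (Nat.factorial_ne_zero _)
      push_cast
      field_simp
      ring
    rw [hLHS]
    have hsingle : ∑ r ∈ ZB l, (if ZPlus (addDelta l r) ∧ ¬(l r = -1 ∧ ¬ Even (zcount l))
          then schurP (addDelta l r) else 0)
        = (if ZPlus (addDelta l r0) ∧ ¬(l r0 = -1 ∧ ¬ Even (zcount l))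
          then schurP (addDelta l r0) else 0) := by
      apply Finset.sum_eq_single_of_mem r0 hr0Z
      intro r hrZ hne
      apply if_neg
      intro hc
      have hr0r : r0 < r := lt_of_le_of_ne (Finset.min'_le _ _ hrZ) (Ne.symm hne)
      have hmono := hc.1.1 (le_of_lt hr0r)
      rw [addDelta_val, addDelta_val, if_pos rfl, if_neg (fun h : r0 = r => hne h.symm)] at hmono
      have := mem_ZB.mp hrZ
      omega
    rw [hsingle]
    by_cases h1 : ∃ s, l s = 1
    · obtain ⟨s, hs1⟩ := h1
      have hsnr : s ≠ r0 := fun h => by rw [h, hl0] at hs1; omega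
      have hsr0 : s < r0 := lv_lt hl (by omega)
      have hadj : ∀ t : Fin n, s < t → t < r0 → False := by
        intro t ha hb
        have ht1 : l t ≤ l s := hl.1 (le_of_lt ha)
        have ht2 : l r0 ≤ l t := hl.1 (le_of_lt hb)
        have : l t = 0 ∨ l t = 1 := by omega
        rcases this with h | h
        · exact absurd (Finset.min'_le (ZB l) t (mem_ZB.mpr h)) (not_le.mpr hb)
        · have := hl.2 s t ha (by omega)
          omega
      have hab : addDelta l r0 s = addDelta l r0 r0 := by
        rw [addDelta_val, addDelta_val, if_neg hsnr, if_pos rfl]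
        omega
      have hvan : SS (addDelta l r0) (PZ ((ZB l).erase r0)) = 0 := by
        apply SS_vanish (addDelta l r0) ((ZB l).erase r0) (s := s) (r := r0)
          (fun h => by have := mem_ZB.mp (Finset.mem_of_mem_erase h); omega)
          (Finset.notMem_erase r0 _) hsr0 hadj (comp_swap _ hab)
      have hcond : ¬ ZPlus (addDelta l r0) := by
        intro hc
        have := hc.2 s r0 hsr0 hab
        rw [addDelta_val, if_neg hsnr] at this
        omega
      rw [hvan, mul_zero, if_neg (fun hc => hcond hc.1)]
    · have hZP := ZPlus_addDelta_min l hl hz h1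
      rw [if_pos ⟨hZP, fun hc => by rw [hl0] at hc; exact absurd hc.1 (by norm_num)⟩,
        schurP_eq _ hZP, ZB_addDelta_zero l hl0, Finset.card_erase_of_mem hr0Z]
  · -- PART 1 : the nonzero entries
    apply Finset.sum_congr rfl
    intro r hr
    have hr0 : l r ≠ 0 := by simpa using (Finset.mem_filter.mp hr).2
    by_cases hneg : l r = -1
    · have hZP : ZPlus (addDelta l r) := ZPlus_addDelta_neg l hl hneg
      have hrZ : r ∉ ZB l := fun h => hr0 (mem_ZB.mp h)
      have hcb := caseB l hl hneg
      have hcard : (insert r (ZB l)).card = (ZB l).card + 1 :=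
        Finset.card_insert_of_notMem hrZ
      rw [hcard] at hcb
      have hsm : (((ZB l).card + 1 : ℕ) : K n) * SS (addDelta l r) (PZ (ZB l))
          = (if Even (ZB l).card then 1 else 0) *
              SS (addDelta l r) (PZ (insert r (ZB l))) := by
        rw [← hcb, nsmul_eq_mul]
      have hz1 : (((ZB l).card + 1 : ℕ) : K n) ≠ 0 :=
        Nat.cast_ne_zero.mpr (Nat.succ_ne_zero _)
      by_cases hev : Even ((ZB l).card)
      · rw [if_pos ⟨hZP, fun hc => hc.2 hev⟩]
        rw [schurP_eq _ hZP, ZB_addDelta_neg l hneg, hcard]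
        rw [if_pos hev, one_mul] at hsm
        rw [← hsm, Nat.factorial_succ]
        have hfz : (((ZB l).card.factorial : ℕ) : K n) ≠ 0 :=
          Nat.cast_ne_zero.mpr (Nat.factorial_ne_zero _)
        push_cast
        push_cast at hz1
        field_simp
      · rw [if_neg (fun hc => hc.2 ⟨hneg, hev⟩)]
        rw [if_neg hev, zero_mul] at hsm
        have hS0 : SS (addDelta l r) (PZ (ZB l)) = 0 :=
          (mul_eq_zero.mp hsm).resolve_left hz1
        rw [hS0, mul_zero]
    · by_cases hcol : ∃ s, l s = l r + 1
      · obtain ⟨s, hs⟩ := hcol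
        have hsne : s ≠ r := fun h => by rw [h] at hs; omega
        have hsr : s < r := lv_lt hl (by omega)
        have hls0 : l s ≠ 0 := by omega
        have hadj : ∀ t : Fin n, s < t → t < r → False := by
          intro t ha hb
          have ht1 : l t ≤ l s := hl.1 (le_of_lt ha)
          have ht2 : l r ≤ l t := hl.1 (le_of_lt hb)
          have : l t = l r ∨ l t = l s := by omega
          rcases this with h | h
          · have h0 := hl.2 t r hb h
            omega
          · have h0 := hl.2 s t ha (by omega)
            omega
        have hab : addDelta l r s = addDelta l r r := by
          rw [addDelta_val, addDelta_val, if_neg hsne, if_pos rfl]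
          omega
        have hvan : SS (addDelta l r) (PZ (ZB l)) = 0 := by
          apply SS_vanish (addDelta l r) (ZB l) (s := s) (r := r)
            (fun h => hls0 (mem_ZB.mp h)) (fun h => hr0 (mem_ZB.mp h)) hsr hadj
            (comp_swap _ hab)
        have hnZP : ¬ ZPlus (addDelta l r) := by
          intro hc
          have := hc.2 s r hsr hab
          rw [addDelta_val, if_neg hsne] at this
          omega
        rw [hvan, mul_zero, if_neg (fun hc => hnZP hc.1)]
      · have hZP := ZPlus_addDelta_gen l hl hr0 hneg hcol
        rw [if_pos ⟨hZP, fun hc => hneg hc.1⟩, schurP_eq _ hZP, ZB_addDelta_other l hr0 hneg]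

end
end

section
/- Let n ≥ 0 and λ ∈ ℤⁿ. If λ ∈ ℤⁿ₊ then π(v_{λ_n} ⊗ … ⊗ v_{λ_1}) = F_λ. If λ ∉ ℤⁿ₊ then π(v_{λ_n} ⊗ … ⊗ v_{λ_1}) = Σ_μ c_μ F_μ, where the sum is over μ ∈ ℤⁿ₊ with μ ≽ λ in the Bruhat ordering and each coefficient c_μ ∈ ℚ(q) is a polynomial in q with zero constant term (i.e. c_μ ∈ q·ℤ[q]). -/
noncomputable section

/-- The ground field `F = ℚ(q)`. -/
abbrev Fq : Type := RatFunc ℚ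

/-- The variable `q ∈ ℚ(q)`. -/
def qF : Fq := RatFunc.X

/-- The tensor power `V^{⊗n}`, realized concretely on the basis
`N_λ = v_{λ_1} ⊗ … ⊗ v_{λ_n}`, `λ ∈ ℤⁿ`. -/
abbrev Tn (n : ℕ) := (Fin n → ℤ) →₀ Fq

/-- The basis vector `N_λ = v_{λ_1} ⊗ … ⊗ v_{λ_n}` of `V^{⊗n}`. -/
def Nb {n : ℕ} (l : Fin n → ℤ) : Tn n := Finsupp.single l 1

/-- The vector `v_a ⊗ v_b ∈ V ⊗ V`. -/
def vv (a b : ℤ) : Tn 2 := Nb ![a, b]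

/-- The set of generators of the subspace `K ⊆ V ⊗ V`. -/
def Kgen : Set (Tn 2) :=
  {x | ∃ a : ℤ, a ≠ 0 ∧ x = vv a a} ∪
  {x | ∃ a b : ℤ, b < a ∧ a + b ≠ 0 ∧ x = vv a b + qF ^ 2 • vv b a} ∪
  {x | ∃ a : ℤ, 2 ≤ a ∧ x = vv a (-a)
        + qF ^ 2 • (vv (a - 1) (1 - a) + vv (1 - a) (a - 1))
        + qF ^ 4 • vv (-a) a} ∪
  {vv 1 (-1) + qF • vv 0 0 + qF ^ 4 • vv (-1) 1}

/-- Insertion of a vector `g ∈ V ⊗ V` in positions `i, i+1` (0-indexed) of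
`V^{⊗n}`, the remaining positions being given by `μ`. -/
def insElt {n : ℕ} (i : ℕ) (h : i + 1 < n) (μ : Fin n → ℤ) (g : Tn 2) : Tn n :=
  g.sum fun ab c =>
    c • Nb (fun t => if t = (⟨i, Nat.lt_of_succ_lt h⟩ : Fin n) then ab 0
      else if t = (⟨i + 1, h⟩ : Fin n) then ab 1 else μ t)

/-- `Kⁿ = Σ_{i+2+j = n} V^{⊗i} ⊗ K ⊗ V^{⊗j} ⊆ V^{⊗n}`. -/
def Ksub (n : ℕ) : Submodule Fq (Tn n) :=
  Submodule.span Fq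
    {x | ∃ (i : ℕ) (h : i + 1 < n) (μ : Fin n → ℤ) (g : Tn 2),
      g ∈ Kgen ∧ x = insElt i h μ g}

/-- The quantum exterior power `𝔉ⁿ = V^{⊗n}/Kⁿ`. -/
abbrev Fn (n : ℕ) := Tn n ⧸ Ksub n

/-- The quotient map `π : V^{⊗n} → 𝔉ⁿ`. -/
def piQ (n : ℕ) : Tn n →ₗ[Fq] Fn n := (Ksub n).mkQ

/-- `F_λ = π(v_{λ_n} ⊗ … ⊗ v_{λ_1}) ∈ 𝔉ⁿ`. -/
def Fb {n : ℕ} (l : Fin n → ℤ) : Fn n := piQ n (Nb fun t => l (Fin.rev t))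

/-- `ε_a` for `a ∈ ℤ` in the free abelian group `P = ⊕_{i ≥ 1} ℤ·ε_i`:
`ε_0 = 0` and `ε_{−i} = −ε_i`. -/
def epsP (a : ℤ) : ℕ →₀ ℤ := a.sign • Finsupp.single a.natAbs 1

/-- The simple roots `α_0 = −ε_1`, `α_i = ε_i − ε_{i+1}` for `i ≥ 1`. -/
def alphaP (i : ℕ) : ℕ →₀ ℤ :=
  if i = 0 then -Finsupp.single 1 1
  else Finsupp.single i 1 - Finsupp.single (i + 1) 1

/-- The dominance order on `P`: `β ≤ γ` iff `γ − β` is an `ℕ`-linear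
combination of the simple roots. -/
def leP (β γ : ℕ →₀ ℤ) : Prop :=
  ∃ c : ℕ →₀ ℕ, γ - β = c.sum fun i m => (m : ℤ) • alphaP i

/-- `wt_r(λ) = ε_{λ_r} + … + ε_{λ_n}`. -/
def wtr {n : ℕ} (l : Fin n → ℤ) (r : Fin n) : ℕ →₀ ℤ :=
  ∑ t ∈ Finset.univ.filter (fun t => r ≤ t), epsP (l t)

/-- The Bruhat ordering: `λ ≼ μ` iff `wt_r(λ) ≤ wt_r(μ)` for all `r`, with
equality for `r = 1` (i.e. `wt(λ) = wt(μ)`). -/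
def bruhatLE {n : ℕ} (l μ : Fin n → ℤ) : Prop :=
  (∀ r : Fin n, leP (wtr l r) (wtr μ r)) ∧
    (∑ t : Fin n, epsP (l t)) = ∑ t : Fin n, epsP (μ t)

/-- `c ∈ q·ℤ[q]`: `c` is an integral polynomial in `q` with zero constant
term. -/
def qPoly0 (c : Fq) : Prop :=
  ∃ P : Polynomial ℤ, P.coeff 0 = 0 ∧ c = Polynomial.eval₂ (Int.castRingHom Fq) qF P

noncomputable section
-- eps and leP lemmas

lemma epsP_zero : epsP 0 = 0 := by simp [epsP]

lemma epsP_neg (a : ℤ) : epsP (-a) = - epsP a := by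
  simp [epsP, Int.sign_neg, Int.natAbs_neg, neg_smul]

lemma epsP_nat (t : ℕ) (ht : t ≠ 0) : epsP (t : ℤ) = Finsupp.single t 1 := by
  simp [epsP, Int.sign_natCast_of_ne_zero ht, Int.natAbs_natCast]

lemma alpha_step (t : ℕ) : epsP (t : ℤ) - epsP ((t : ℤ) + 1) = alphaP t := by
  rcases Nat.eq_zero_or_pos t with h | h
  · subst h
    rw [show (((0:ℕ):ℤ)+1) = ((1:ℕ):ℤ) by norm_num, epsP_nat 1 one_ne_zero]
    simp [epsP_zero, alphaP]
  · have ht : t ≠ 0 := by omega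
    rw [show ((t:ℤ)+1) = ((t+1:ℕ):ℤ) by push_cast; ring, epsP_nat t ht,
      epsP_nat (t+1) (by omega)]
    simp [alphaP, ht]

lemma leP_refl (β : ℕ →₀ ℤ) : leP β β := ⟨0, by simp⟩

lemma leP_of_diff {β γ : ℕ →₀ ℤ} {δ δ' : ℕ →₀ ℤ} (h : leP δ δ') (hd : γ - β = δ' - δ) :
    leP β γ := by obtain ⟨c, hc⟩ := h; exact ⟨c, hd.trans hc⟩

lemma leP_sum_add (c₁ c₂ : ℕ →₀ ℕ) :
    ((c₁ + c₂).sum fun i m => (m : ℤ) • alphaP i)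
      = (c₁.sum fun i m => (m : ℤ) • alphaP i) + (c₂.sum fun i m => (m : ℤ) • alphaP i) := by
  apply Finsupp.sum_add_index'
  · intro a; simp
  · intro a b₁ b₂; push_cast; rw [add_smul]

lemma leP_trans {β γ δ : ℕ →₀ ℤ} (h₁ : leP β γ) (h₂ : leP γ δ) : leP β δ := by
  obtain ⟨c₁, hc₁⟩ := h₁; obtain ⟨c₂, hc₂⟩ := h₂
  refine ⟨c₁ + c₂, ?_⟩
  rw [leP_sum_add, ← hc₁, ← hc₂]; abel

lemma leP_eps_nat (s t : ℕ) (hst : s ≤ t) : leP (epsP (t : ℤ)) (epsP (s : ℤ)) := by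
  induction t, hst using Nat.le_induction with
  | base => exact leP_refl _
  | succ t hst ih =>
    refine leP_trans ?_ ih
    exact ⟨Finsupp.single t 1, by
      rw [Finsupp.sum_single_index (by simp)]
      push_cast
      rw [one_smul, ← alpha_step t]⟩

lemma epsP_split (z : ℤ) : epsP z = epsP (z.toNat : ℤ) - epsP ((-z).toNat : ℤ) := by
  rcases lt_trichotomy z 0 with h | h | h
  · rw [show (z.toNat : ℤ) = ((0:ℕ):ℤ) by omega, show ((-z).toNat : ℤ) = -z by omega]
    push_cast
    rw [epsP_zero, epsP_neg]; abel
  · subst h; simp [epsP_zero]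
  · rw [show (z.toNat : ℤ) = z by omega, show ((-z).toNat : ℤ) = ((0:ℕ):ℤ) by omega]
    push_cast
    rw [epsP_zero]; abel

lemma leP_add {β γ β' γ' : ℕ →₀ ℤ} (h : leP β γ) (h' : leP β' γ') : leP (β + β') (γ + γ') := by
  obtain ⟨c, hc⟩ := h; obtain ⟨c', hc'⟩ := h'
  refine ⟨c + c', ?_⟩
  rw [leP_sum_add, ← hc, ← hc']; abel

lemma leP_eps {b a : ℤ} (hba : b ≤ a) : leP (epsP a) (epsP b) := by
  have h1 : leP (epsP (a.toNat : ℤ)) (epsP (b.toNat : ℤ)) :=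
    leP_eps_nat _ _ (by omega)
  have h2 : leP (epsP ((-b).toNat : ℤ)) (epsP ((-a).toNat : ℤ)) :=
    leP_eps_nat _ _ (by omega)
  obtain ⟨c₁, hc₁⟩ := h1; obtain ⟨c₂, hc₂⟩ := h2
  refine ⟨c₁ + c₂, ?_⟩
  rw [leP_sum_add, ← hc₁, ← hc₂, epsP_split a, epsP_split b]; abel

end

noncomputable section
-- coefficient lemmas

def intPoly (c : Fq) : Prop :=
  ∃ P : Polynomial ℤ, c = Polynomial.eval₂ (Int.castRingHom Fq) qF P

lemma intPoly_zero : intPoly 0 := ⟨0, by simp⟩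
lemma intPoly_one : intPoly 1 := ⟨1, by simp⟩
lemma qPoly0_zero : qPoly0 0 := ⟨0, by simp, by simp⟩

lemma qPoly0_add {a b : Fq} (ha : qPoly0 a) (hb : qPoly0 b) : qPoly0 (a + b) := by
  obtain ⟨P, hP0, hP⟩ := ha; obtain ⟨Q, hQ0, hQ⟩ := hb
  exact ⟨P + Q, by simp [hP0, hQ0], by simp [hP, hQ, Polynomial.eval₂_add]⟩

lemma qPoly0_mul_int {a b : Fq} (ha : qPoly0 a) (hb : intPoly b) : qPoly0 (a * b) := by
  obtain ⟨P, hP0, hP⟩ := ha; obtain ⟨Q, hQ⟩ := hb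
  exact ⟨P * Q, by simp [Polynomial.mul_coeff_zero, hP0],
    by simp [hP, hQ, Polynomial.eval₂_mul]⟩

lemma qPoly0_intPoly {a : Fq} (ha : qPoly0 a) : intPoly a := by
  obtain ⟨P, _, hP⟩ := ha; exact ⟨P, hP⟩

lemma intPoly_mul {a b : Fq} (ha : intPoly a) (hb : intPoly b) : intPoly (a * b) := by
  obtain ⟨P, hP⟩ := ha; obtain ⟨Q, hQ⟩ := hb
  exact ⟨P * Q, by simp [hP, hQ, Polynomial.eval₂_mul]⟩

lemma qPoly0_q : qPoly0 qF := ⟨Polynomial.X, by simp, by simp⟩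

lemma qPoly0_neg {a : Fq} (ha : qPoly0 a) : qPoly0 (-a) := by
  obtain ⟨P, hP0, hP⟩ := ha
  exact ⟨-P, by simp [hP0], by simp [hP, Polynomial.eval₂_neg]⟩

lemma qPoly0_pow_succ (k : ℕ) : qPoly0 (qF ^ (k+1)) := by
  induction k with
  | zero => simpa using qPoly0_q
  | succ k ih =>
    have := qPoly0_mul_int ih (qPoly0_intPoly qPoly0_q)
    rw [pow_succ]; rw [pow_succ] at this; exact this

lemma qPoly0_neg_pow (k : ℕ) (hk : k ≠ 0) : qPoly0 (-(qF ^ k)) := by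
  apply qPoly0_neg
  obtain ⟨k, rfl⟩ := Nat.exists_eq_succ_of_ne_zero hk
  exact qPoly0_pow_succ k
end

noncomputable section
-- relations in the quotient

variable {n : ℕ}

def updAt (m : Fin n → ℤ) (i : ℕ) (h : i + 1 < n) (x y : ℤ) : Fin n → ℤ :=
  fun t => if t = (⟨i, Nat.lt_of_succ_lt h⟩ : Fin n) then x
    else if t = (⟨i + 1, h⟩ : Fin n) then y else m t

lemma updAt_self (m : Fin n → ℤ) (i : ℕ) (h : i + 1 < n) :
    updAt m i h (m ⟨i, Nat.lt_of_succ_lt h⟩) (m ⟨i+1, h⟩) = m := by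
  funext t
  unfold updAt
  split_ifs with h1 h2
  · rw [h1]
  · rw [h2]
  · rfl

lemma ins_vv (i : ℕ) (h : i + 1 < n) (m : Fin n → ℤ) (x y : ℤ) :
    insElt i h m (vv x y) = Nb (updAt m i h x y) := by
  unfold insElt vv Nb updAt
  rw [Finsupp.sum_single_index (by simp)]
  simp

lemma ins_add (i : ℕ) (h : i + 1 < n) (m : Fin n → ℤ) (g₁ g₂ : Tn 2) :
    insElt i h m (g₁ + g₂) = insElt i h m g₁ + insElt i h m g₂ := by
  unfold insElt
  apply Finsupp.sum_add_index' (by intro a; simp) (by intro a b₁ b₂; rw [add_smul])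

lemma ins_smul (i : ℕ) (h : i + 1 < n) (m : Fin n → ℤ) (a : Fq) (g : Tn 2) :
    insElt i h m (a • g) = a • insElt i h m g := by
  unfold insElt
  rw [Finsupp.smul_sum]
  apply Finsupp.sum_smul_index (by intro i; simp) |>.trans
  congr 1
  funext i c
  rw [mul_smul]

lemma piQ_ins (i : ℕ) (h : i + 1 < n) (m : Fin n → ℤ) (g : Tn 2) (hg : g ∈ Kgen) :
    piQ n (insElt i h m g) = 0 := by
  rw [piQ, Submodule.mkQ_apply, Submodule.Quotient.mk_eq_zero]
  exact Submodule.subset_span ⟨i, h, m, g, hg, rfl⟩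

lemma cancel2 {M : Type*} [AddCommGroup M] {x y w : M} (h : x + y + w = 0) :
    x = -y + -w := by
  have : x = -(y + w) := by
    rw [eq_neg_iff_add_eq_zero]; rw [← h]; abel
  rw [this]; abel

lemma cancel3 {M : Type*} [AddCommGroup M] {x y z w : M} (h : x + (y + z) + w = 0) :
    x = -y + -z + -w := by
  have : x = -(y + z + w) := by
    rw [eq_neg_iff_add_eq_zero]; rw [← h]; abel
  rw [this]; abel

lemma rel1 (i : ℕ) (h : i + 1 < n) (m : Fin n → ℤ) (a : ℤ) (ha : a ≠ 0) :
    piQ n (Nb (updAt m i h a a)) = 0 := by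
  have := piQ_ins i h m (vv a a) (Or.inl (Or.inl (Or.inl ⟨a, ha, rfl⟩)))
  rwa [ins_vv] at this

lemma rel2 (i : ℕ) (h : i + 1 < n) (m : Fin n → ℤ) (a b : ℤ) (hb : b < a) (hab : a + b ≠ 0) :
    piQ n (Nb (updAt m i h a b)) = (-(qF^2)) • piQ n (Nb (updAt m i h b a)) := by
  have := piQ_ins i h m (vv a b + qF ^ 2 • vv b a)
    (Or.inl (Or.inl (Or.inr ⟨a, b, hb, hab, rfl⟩)))
  rw [ins_add, ins_smul, ins_vv, ins_vv, map_add, map_smul] at this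
  rw [neg_smul]
  have h2 := eq_neg_of_add_eq_zero_left this
  rw [h2]

lemma rel3 (i : ℕ) (h : i + 1 < n) (m : Fin n → ℤ) (a : ℤ) (ha : 2 ≤ a) :
    piQ n (Nb (updAt m i h a (-a)))
      = (-(qF^2)) • piQ n (Nb (updAt m i h (a-1) (1-a)))
        + (-(qF^2)) • piQ n (Nb (updAt m i h (1-a) (a-1)))
        + (-(qF^4)) • piQ n (Nb (updAt m i h (-a) a)) := by
  have := piQ_ins i h m (vv a (-a)
        + qF ^ 2 • (vv (a - 1) (1 - a) + vv (1 - a) (a - 1))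
        + qF ^ 4 • vv (-a) a)
    (Or.inl (Or.inr ⟨a, ha, rfl⟩))
  rw [ins_add, ins_add, ins_smul, ins_smul, ins_add, ins_vv, ins_vv, ins_vv, ins_vv] at this
  simp only [map_add, map_smul, smul_add] at this
  simp only [neg_smul]
  exact cancel3 this

lemma rel4 (i : ℕ) (h : i + 1 < n) (m : Fin n → ℤ) :
    piQ n (Nb (updAt m i h 1 (-1)))
      = (-qF) • piQ n (Nb (updAt m i h 0 0))
        + (-(qF^4)) • piQ n (Nb (updAt m i h (-1) 1)) := by
  have := piQ_ins i h m (vv 1 (-1) + qF • vv 0 0 + qF ^ 4 • vv (-1) 1)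
    (Or.inr rfl)
  rw [ins_add, ins_add, ins_smul, ins_smul, ins_vv, ins_vv, ins_vv] at this
  simp only [map_add, map_smul] at this
  simp only [neg_smul]
  exact cancel2 this
end

noncomputable section
-- bruhat lemmas

variable {n : ℕ}

lemma bruhat_refl (l : Fin n → ℤ) : bruhatLE l l :=
  ⟨fun r => leP_refl _, rfl⟩

lemma bruhat_trans {l₁ l₂ l₃ : Fin n → ℤ} (h₁ : bruhatLE l₁ l₂) (h₂ : bruhatLE l₂ l₃) :
    bruhatLE l₁ l₃ :=
  ⟨fun r => leP_trans (h₁.1 r) (h₂.1 r), h₁.2.trans h₂.2⟩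

lemma comp_update (f : Fin n → ℤ) (u : Fin n) (x : ℤ) (φ : ℤ → (ℕ →₀ ℤ)) :
    (fun s => φ (Function.update f u x s)) = Function.update (fun s => φ (f s)) u (φ x) := by
  funext s; by_cases hs : s = u
  · subst hs; simp
  · simp [Function.update_of_ne hs]

lemma wtr_rev (g : Fin n → ℤ) (r : Fin n) :
    wtr (g ∘ Fin.rev) r = ∑ s ∈ Finset.univ.filter (fun s => s ≤ Fin.rev r), epsP (g s) := by
  unfold wtr
  apply Finset.sum_equiv Fin.revPerm
  · intro t
    simp only [Finset.mem_filter, Finset.mem_univ, true_and, Fin.revPerm_apply]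
    rw [← Fin.rev_le_rev]
  · intro t _
    rfl

lemma updAt_eq (m : Fin n → ℤ) (i : ℕ) (h : i + 1 < n) (x y : ℤ) :
    updAt m i h x y
      = Function.update (Function.update m ⟨i, Nat.lt_of_succ_lt h⟩ x) ⟨i+1, h⟩ y := by
  have huv : (⟨i, Nat.lt_of_succ_lt h⟩ : Fin n) ≠ ⟨i+1, h⟩ := by simp [Fin.ext_iff]
  funext t
  unfold updAt
  by_cases h1 : t = ⟨i, Nat.lt_of_succ_lt h⟩
  · subst h1
    rw [if_pos rfl, Function.update_of_ne huv, Function.update_self]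
  · by_cases h2 : t = ⟨i+1, h⟩
    · subst h2
      rw [if_neg h1, if_pos rfl, Function.update_self]
    · rw [if_neg h1, if_neg h2, Function.update_of_ne h2, Function.update_of_ne h1]

lemma sum_eps_updAt (m : Fin n → ℤ) (i : ℕ) (h : i + 1 < n) (x y : ℤ)
    (S : Finset (Fin n))
    (hdown : (⟨i+1, h⟩ : Fin n) ∈ S → (⟨i, Nat.lt_of_succ_lt h⟩ : Fin n) ∈ S) :
    (∑ s ∈ S, epsP (updAt m i h x y s))
      = ∑ s ∈ S, epsP (m s)
        + (if (⟨i, Nat.lt_of_succ_lt h⟩ : Fin n) ∈ S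
            then epsP x - epsP (m ⟨i, Nat.lt_of_succ_lt h⟩) else 0)
        + (if (⟨i+1, h⟩ : Fin n) ∈ S
            then epsP y - epsP (m ⟨i+1, h⟩) else 0) := by
  set u : Fin n := ⟨i, Nat.lt_of_succ_lt h⟩ with hu_def
  set v : Fin n := ⟨i+1, h⟩ with hv_def
  have huv : u ≠ v := by simp [hu_def, hv_def, Fin.ext_iff]
  rw [updAt_eq]
  rw [show (fun s => epsP ((Function.update (Function.update m u x) v y) s))
      = Function.update (Function.update (fun s => epsP (m s)) u (epsP x)) v (epsP y) by
    rw [← comp_update, ← comp_update]]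
  by_cases hv : v ∈ S
  · have hu : u ∈ S := hdown hv
    rw [Finset.sum_update_of_mem hv]
    have hu' : u ∈ S \ {v} := Finset.mem_sdiff.mpr ⟨hu, by simp [huv]⟩
    rw [Finset.sum_update_of_mem hu']
    rw [show ∑ s ∈ S, epsP (m s) = epsP (m v) + ∑ s ∈ S \ {v}, epsP (m s) from
      (Finset.sum_eq_add_sum_sdiff_singleton_of_mem hv _)]
    rw [show ∑ s ∈ S \ {v}, epsP (m s) = epsP (m u) + ∑ s ∈ (S \ {v}) \ {u}, epsP (m s) from
      (Finset.sum_eq_add_sum_sdiff_singleton_of_mem hu' _)]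
    rw [if_pos hu, if_pos hv]
    abel
  · by_cases hu : u ∈ S
    · rw [Finset.sum_update_of_notMem hv, Finset.sum_update_of_mem hu]
      rw [show ∑ s ∈ S, epsP (m s) = epsP (m u) + ∑ s ∈ S \ {u}, epsP (m s) from
        (Finset.sum_eq_add_sum_sdiff_singleton_of_mem hu _)]
      rw [if_pos hu, if_neg hv]
      abel
    · rw [Finset.sum_update_of_notMem hv, Finset.sum_update_of_notMem hu]
      rw [if_neg hu, if_neg hv]
      abel

lemma bruhat_step (i : ℕ) (h : i + 1 < n) (m : Fin n → ℤ) (x y : ℤ)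
    (hw : epsP x + epsP y = epsP (m ⟨i, Nat.lt_of_succ_lt h⟩) + epsP (m ⟨i+1, h⟩))
    (hle : leP (epsP (m ⟨i, Nat.lt_of_succ_lt h⟩)) (epsP x)) :
    bruhatLE (m ∘ Fin.rev) ((updAt m i h x y) ∘ Fin.rev) := by
  have huv : (⟨i, Nat.lt_of_succ_lt h⟩ : Fin n) ≤ ⟨i+1, h⟩ := by
    simp [Fin.le_def]
  have hsum0 : epsP x - epsP (m ⟨i, Nat.lt_of_succ_lt h⟩)
      + (epsP y - epsP (m ⟨i+1, h⟩)) = 0 := by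
    rw [sub_add_sub_comm, sub_eq_zero, hw]
  constructor
  · intro r
    rw [wtr_rev, wtr_rev]
    have hdown : (⟨i+1, h⟩ : Fin n) ∈ Finset.univ.filter (fun s => s ≤ Fin.rev r)
        → (⟨i, Nat.lt_of_succ_lt h⟩ : Fin n) ∈ Finset.univ.filter (fun s => s ≤ Fin.rev r) := by
      intro hv
      simp only [Finset.mem_filter, Finset.mem_univ, true_and] at hv ⊢
      exact le_trans huv hv
    rw [sum_eps_updAt m i h x y _ hdown]
    by_cases hv : (⟨i+1, h⟩ : Fin n) ∈ Finset.univ.filter (fun s => s ≤ Fin.rev r)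
    · rw [if_pos (hdown hv), if_pos hv, add_assoc, hsum0, add_zero]
      exact leP_refl _
    · by_cases hu : (⟨i, Nat.lt_of_succ_lt h⟩ : Fin n)
          ∈ Finset.univ.filter (fun s => s ≤ Fin.rev r)
      · rw [if_pos hu, if_neg hv, add_zero]
        exact leP_of_diff hle (by abel)
      · rw [if_neg hu, if_neg hv, add_zero, add_zero]
        exact leP_refl _
  · have hbij : ∀ g : Fin n → ℤ, ∑ t : Fin n, epsP (g (Fin.rev t)) = ∑ t : Fin n, epsP (g t) :=
      fun g => Fin.rev_bijective.sum_comp (fun t => epsP (g t))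
    show ∑ t : Fin n, epsP (m (Fin.rev t)) = ∑ t : Fin n, epsP ((updAt m i h x y) (Fin.rev t))
    rw [hbij, hbij]
    rw [sum_eps_updAt m i h x y Finset.univ (fun _ => Finset.mem_univ _)]
    rw [if_pos (Finset.mem_univ _), if_pos (Finset.mem_univ _), add_assoc, hsum0, add_zero]
end

noncomputable section
-- the measure

variable {n : ℕ}

def dm (m : Fin n → ℤ) (k l : Fin n) : ℕ := if k < l then (m k - m l).toNat else 0

def fm (m : Fin n → ℤ) : ℕ := ∑ k : Fin n, ∑ l : Fin n, dm m k l

lemma dm_pos {m : Fin n → ℤ} {k l : Fin n} (h : k < l) : dm m k l = (m k - m l).toNat :=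
  if_pos h

lemma dm_zero {m : Fin n → ℤ} {k l : Fin n} (h : ¬ k < l) : dm m k l = 0 :=
  if_neg h

lemma sum2_decomp (u v : Fin n) (huv : u ≠ v) (g : Fin n → Fin n → ℕ) :
    ∑ k : Fin n, ∑ l : Fin n, g k l
      = ((∑ k ∈ Finset.univ \ {u, v}, ∑ l ∈ Finset.univ \ {u, v}, g k l)
        + ∑ k ∈ Finset.univ \ {u, v}, (g k u + g k v))
        + ((∑ l ∈ Finset.univ \ {u, v}, (g u l + g v l))
        + (g u u + g u v + (g v u + g v v))) := by
  have hsub : ({u, v} : Finset (Fin n)) ⊆ Finset.univ := Finset.subset_univ _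
  have hdisj : Disjoint (Finset.univ \ {u, v} : Finset (Fin n)) {u, v} :=
    Finset.sdiff_disjoint
  have hunion : (Finset.univ \ {u, v} : Finset (Fin n)) ∪ {u, v} = Finset.univ :=
    Finset.sdiff_union_of_subset hsub
  have inner : ∀ k, ∑ l : Fin n, g k l
      = ∑ l ∈ Finset.univ \ {u, v}, g k l + (g k u + g k v) := by
    intro k
    conv_lhs => rw [← hunion]
    rw [Finset.sum_union hdisj, Finset.sum_pair huv]
  calc ∑ k : Fin n, ∑ l : Fin n, g k l
      = ∑ k ∈ Finset.univ \ {u, v} ∪ {u, v}, ∑ l : Fin n, g k l := by rw [hunion]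
    _ = ∑ k ∈ Finset.univ \ {u, v}, ∑ l : Fin n, g k l
        + ∑ k ∈ ({u, v} : Finset (Fin n)), ∑ l : Fin n, g k l := Finset.sum_union hdisj
    _ = _ := by
        rw [Finset.sum_pair huv, inner u, inner v]
        simp only [inner]
        rw [Finset.sum_add_distrib]
        rw [show ∑ l ∈ Finset.univ \ {u, v}, (g u l + g v l)
            = ∑ l ∈ Finset.univ \ {u, v}, g u l + ∑ l ∈ Finset.univ \ {u, v}, g v l from
          Finset.sum_add_distrib]
        abel

lemma updAt_apply_u (m : Fin n → ℤ) (i : ℕ) (h : i + 1 < n) (x y : ℤ) :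
    updAt m i h x y ⟨i, Nat.lt_of_succ_lt h⟩ = x := if_pos rfl

lemma updAt_apply_v (m : Fin n → ℤ) (i : ℕ) (h : i + 1 < n) (x y : ℤ) :
    updAt m i h x y ⟨i+1, h⟩ = y := by
  unfold updAt
  rw [if_neg (by simp [Fin.ext_iff]), if_pos rfl]

lemma updAt_apply_ne (m : Fin n → ℤ) (i : ℕ) (h : i + 1 < n) (x y : ℤ) (t : Fin n)
    (h1 : t ≠ ⟨i, Nat.lt_of_succ_lt h⟩) (h2 : t ≠ ⟨i+1, h⟩) :
    updAt m i h x y t = m t := by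
  unfold updAt
  rw [if_neg h1, if_neg h2]

lemma f_step (m : Fin n → ℤ) (i : ℕ) (h : i + 1 < n) (x y : ℤ)
    (hpair : (x - y).toNat < (m ⟨i, Nat.lt_of_succ_lt h⟩ - m ⟨i+1, h⟩).toNat)
    (hbefore : ∀ c : ℤ, (c - x).toNat + (c - y).toNat
      ≤ (c - m ⟨i, Nat.lt_of_succ_lt h⟩).toNat + (c - m ⟨i+1, h⟩).toNat)
    (hafter : ∀ c : ℤ, (x - c).toNat + (y - c).toNat
      ≤ (m ⟨i, Nat.lt_of_succ_lt h⟩ - c).toNat + (m ⟨i+1, h⟩ - c).toNat) :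
    fm (updAt m i h x y) < fm m := by
  set u : Fin n := ⟨i, Nat.lt_of_succ_lt h⟩ with hu_def
  set v : Fin n := ⟨i+1, h⟩ with hv_def
  have huv : u ≠ v := by simp [hu_def, hv_def, Fin.ext_iff]
  have huv_lt : u < v := by simp [hu_def, hv_def, Fin.lt_def]
  set m' := updAt m i h x y with hm'
  have hmu : m' u = x := updAt_apply_u m i h x y
  have hmv : m' v = y := updAt_apply_v m i h x y
  have hT : ∀ k : Fin n, k ∈ Finset.univ \ {u, v} → m' k = m k := by
    intro k hk
    simp only [Finset.mem_sdiff, Finset.mem_insert, Finset.mem_singleton] at hk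
    exact updAt_apply_ne m i h x y k (by tauto) (by tauto)
  have hside : ∀ k : Fin n, k ∈ Finset.univ \ {u, v} → k < u ∨ v < k := by
    intro k hk
    simp only [Finset.mem_sdiff, Finset.mem_insert, Finset.mem_singleton] at hk
    have h1 : k ≠ u := by tauto
    have h2 : k ≠ v := by tauto
    rw [Fin.lt_def, Fin.lt_def]
    simp only [Ne, Fin.ext_iff] at h1 h2
    have e1 : (u : ℕ) = i := rfl
    have e2 : (v : ℕ) = i + 1 := rfl
    omega
  rw [fm, fm, sum2_decomp u v huv (dm m'), sum2_decomp u v huv (dm m)]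
  have hA : ∑ k ∈ Finset.univ \ {u, v}, ∑ l ∈ Finset.univ \ {u, v}, dm m' k l
      = ∑ k ∈ Finset.univ \ {u, v}, ∑ l ∈ Finset.univ \ {u, v}, dm m k l := by
    apply Finset.sum_congr rfl
    intro k hk
    apply Finset.sum_congr rfl
    intro l hl
    unfold dm
    rw [hT k hk, hT l hl]
  have hB : ∑ k ∈ Finset.univ \ {u, v}, (dm m' k u + dm m' k v)
      ≤ ∑ k ∈ Finset.univ \ {u, v}, (dm m k u + dm m k v) := by
    apply Finset.sum_le_sum
    intro k hk
    rcases hside k hk with hlt | hgt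
    · have hlt2 : k < v := lt_trans hlt huv_lt
      rw [dm_pos hlt, dm_pos hlt2, dm_pos hlt, dm_pos hlt2, hT k hk, hmu, hmv]
      exact hbefore (m k)
    · have h1 : ¬ k < v := not_lt_of_gt hgt
      have h2 : ¬ k < u := not_lt_of_gt (lt_trans huv_lt hgt)
      rw [dm_zero h2, dm_zero h1, dm_zero h2, dm_zero h1]
  have hC : ∑ l ∈ Finset.univ \ {u, v}, (dm m' u l + dm m' v l)
      ≤ ∑ l ∈ Finset.univ \ {u, v}, (dm m u l + dm m v l) := by
    apply Finset.sum_le_sum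
    intro l hl
    rcases hside l hl with hlt | hgt
    · have h1 : ¬ u < l := not_lt_of_gt hlt
      have h2 : ¬ v < l := not_lt_of_gt (lt_trans hlt huv_lt)
      rw [dm_zero h1, dm_zero h2, dm_zero h1, dm_zero h2]
    · have h1 : u < l := lt_trans huv_lt hgt
      rw [dm_pos h1, dm_pos hgt, dm_pos h1, dm_pos hgt, hT l hl, hmu, hmv]
      exact hafter (m l)
  have hD : dm m' u u + dm m' u v + (dm m' v u + dm m' v v)
      < dm m u u + dm m u v + (dm m v u + dm m v v) := by
    rw [dm_zero (lt_irrefl u), dm_zero (lt_irrefl v), dm_zero (not_lt_of_gt huv_lt),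
      dm_zero (lt_irrefl u), dm_zero (lt_irrefl v), dm_zero (not_lt_of_gt huv_lt),
      dm_pos huv_lt, dm_pos huv_lt, hmu, hmv]
    omega
  omega
end

noncomputable section
-- standardness and the main induction

variable {n : ℕ}

lemma intPoly_add {a b : Fq} (ha : intPoly a) (hb : intPoly b) : intPoly (a + b) := by
  obtain ⟨P, hP⟩ := ha; obtain ⟨Q, hQ⟩ := hb
  exact ⟨P + Q, by simp [hP, hQ, Polynomial.eval₂_add]⟩

lemma mono_of_adj (m : Fin n → ℤ)
    (hadj : ∀ (i : ℕ) (h : i + 1 < n), m ⟨i, Nat.lt_of_succ_lt h⟩ ≤ m ⟨i+1, h⟩) :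
    Monotone m := by
  have key : ∀ d : ℕ, ∀ j k : Fin n, (k : ℕ) = (j : ℕ) + d → m j ≤ m k := by
    intro d
    induction d with
    | zero =>
      intro j k hk
      have : j = k := Fin.ext (by omega)
      rw [this]
    | succ d ih =>
      intro j k hk
      have hx : (j : ℕ) + d + 1 < n := by omega
      have h1 : m j ≤ m ⟨(j : ℕ) + d, Nat.lt_of_succ_lt hx⟩ := ih j _ rfl
      have h2 := hadj ((j : ℕ) + d) hx
      have : k = ⟨(j : ℕ) + d + 1, hx⟩ := Fin.ext (by simp only [Fin.val_mk]; omega)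
      rw [this]
      exact le_trans h1 h2
  intro j k hjk
  exact key ((k : ℕ) - (j : ℕ)) j k (by rw [Fin.le_def] at hjk; omega)

lemma zplus_of_adj (m : Fin n → ℤ)
    (hadj : ∀ (i : ℕ) (h : i + 1 < n),
      m ⟨i, Nat.lt_of_succ_lt h⟩ ≤ m ⟨i+1, h⟩
        ∧ (m ⟨i, Nat.lt_of_succ_lt h⟩ = m ⟨i+1, h⟩ → m ⟨i, Nat.lt_of_succ_lt h⟩ = 0)) :
    ZPlus (m ∘ Fin.rev) := by
  have hmono : Monotone m := mono_of_adj m (fun i h => (hadj i h).1)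
  constructor
  · intro r s hrs
    exact hmono (Fin.rev_le_rev.mpr hrs)
  · intro r s hrs heq
    set j := Fin.rev s
    set k := Fin.rev r
    have hjk : j < k := by
      simp only [j, k]
      exact Fin.rev_lt_rev.mpr hrs
    have hj1 : (j : ℕ) + 1 < n := by
      have := hjk
      rw [Fin.lt_def] at this
      omega
    have heq2 : m j = m k := heq.symm
    have hle1 : m j ≤ m ⟨(j : ℕ) + 1, hj1⟩ := by
      have := (hadj (j : ℕ) hj1).1
      have hj : (⟨(j : ℕ), Nat.lt_of_succ_lt hj1⟩ : Fin n) = j := Fin.ext rfl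
      rwa [hj] at this
    have hle2 : m ⟨(j : ℕ) + 1, hj1⟩ ≤ m k := by
      apply hmono
      rw [Fin.le_def]
      simp only
      rw [Fin.lt_def] at hjk
      omega
    have heq3 : m j = m ⟨(j : ℕ) + 1, hj1⟩ := le_antisymm hle1 (by omega)
    have := (hadj (j : ℕ) hj1).2
    have hj : (⟨(j : ℕ), Nat.lt_of_succ_lt hj1⟩ : Fin n) = j := Fin.ext rfl
    rw [hj] at this
    have hj0 : m j = 0 := this heq3
    show (m ∘ Fin.rev) r = 0
    rw [show (m ∘ Fin.rev) r = m k from rfl, ← heq2]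
    exact hj0

lemma bad_pair (m : Fin n → ℤ) (hstd : ¬ ZPlus (m ∘ Fin.rev)) :
    ∃ (i : ℕ) (h : i + 1 < n),
      m ⟨i+1, h⟩ < m ⟨i, Nat.lt_of_succ_lt h⟩
        ∨ (m ⟨i, Nat.lt_of_succ_lt h⟩ = m ⟨i+1, h⟩ ∧ m ⟨i, Nat.lt_of_succ_lt h⟩ ≠ 0) := by
  by_contra hcon
  push_neg at hcon
  apply hstd
  apply zplus_of_adj
  intro i h
  have := hcon i h
  constructor
  · omega
  · intro heq
    rcases this with ⟨h1, h2⟩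
    by_contra h0
    exact h0 (by omega)

def Concl (n : ℕ) (m : Fin n → ℤ) : Prop :=
  ∃ c : (Fin n → ℤ) →₀ Fq,
    (∀ μ ∈ c.support, ZPlus μ ∧ bruhatLE (m ∘ Fin.rev) μ) ∧
    (∀ μ, intPoly (c μ)) ∧
    (∀ μ, qPoly0 (c μ) ∨ ZPlus (m ∘ Fin.rev)) ∧
    piQ n (Nb m) = c.sum fun μ d => d • Fb μ

lemma sumFb_add (c₁ c₂ : (Fin n → ℤ) →₀ Fq) :
    ((c₁ + c₂).sum fun μ d => d • Fb μ)
      = (c₁.sum fun μ d => d • Fb μ) + (c₂.sum fun μ d => d • Fb μ) :=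
  Finsupp.sum_add_index' (fun μ => zero_smul _ _) (fun μ d₁ d₂ => add_smul _ _ _)

lemma resolve (m m' : Fin n → ℤ) (a : Fq) (ha : qPoly0 a)
    (hbr : bruhatLE (m ∘ Fin.rev) (m' ∘ Fin.rev)) (hc : Concl n m') :
    ∃ c : (Fin n → ℤ) →₀ Fq,
      (∀ μ ∈ c.support, ZPlus μ ∧ bruhatLE (m ∘ Fin.rev) μ) ∧
      (∀ μ, qPoly0 (c μ)) ∧
      a • piQ n (Nb m') = c.sum fun μ d => d • Fb μ := by
  obtain ⟨c', h1, h2, _, h4⟩ := hc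
  refine ⟨a • c', ?_, ?_, ?_⟩
  · intro μ hμ
    have hμ' : μ ∈ c'.support := Finsupp.support_smul hμ
    exact ⟨(h1 μ hμ').1, bruhat_trans hbr (h1 μ hμ').2⟩
  · intro μ
    rw [Finsupp.smul_apply, smul_eq_mul]
    exact qPoly0_mul_int ha (h2 μ)
  · rw [h4]
    have hssi : (a • c').sum (fun μ d => d • Fb μ) = c'.sum fun μ d => (a * d) • Fb μ :=
      Finsupp.sum_smul_index (fun μ => zero_smul Fq (Fb μ))
    rw [hssi, Finsupp.smul_sum]
    exact Finsupp.sum_congr (fun μ _ => (mul_smul a (c' μ) (Fb μ)).symm)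

lemma main_ind : ∀ (N : ℕ) (m : Fin n → ℤ), fm m < N → Concl n m := by
  intro N
  induction N with
  | zero => intro m h; omega
  | succ N IH =>
    intro m hm
    by_cases hstd : ZPlus (m ∘ Fin.rev)
    · refine ⟨Finsupp.single (m ∘ Fin.rev) 1, ?_, ?_, ?_, ?_⟩
      · intro μ hμ
        have := Finsupp.support_single_subset hμ
        rw [Finset.mem_singleton] at this
        subst this
        exact ⟨hstd, bruhat_refl _⟩
      · intro μ
        rw [Finsupp.single_apply]
        split_ifs
        · exact intPoly_one
        · exact intPoly_zero
      · intro μ; right; exact hstd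
      · rw [Finsupp.sum_single_index (show (0:Fq) • Fb (m ∘ Fin.rev) = 0 from zero_smul _ _),
          one_smul]
        unfold Fb
        congr 1
        unfold Nb
        congr 1
        funext t
        simp [Function.comp, Fin.rev_rev]
    · obtain ⟨i, h, hbad⟩ := bad_pair m hstd
      set a := m ⟨i, Nat.lt_of_succ_lt h⟩ with ha_def
      set b := m ⟨i+1, h⟩ with hb_def
      have hm_eq : m = updAt m i h a b := (updAt_self m i h).symm
      by_cases hab_lt : b < a
      · by_cases hab0 : a + b = 0
        · -- b = -a, a ≥ 1
          have hb_eq : b = -a := by omega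
          have ha_pos : 1 ≤ a := by omega
          by_cases ha2 : 2 ≤ a
          · -- case S3
            have hrel : piQ n (Nb m)
                = (-(qF^2)) • piQ n (Nb (updAt m i h (a-1) (1-a)))
                  + (-(qF^2)) • piQ n (Nb (updAt m i h (1-a) (a-1)))
                  + (-(qF^4)) • piQ n (Nb (updAt m i h (-a) a)) := by
              conv_lhs => rw [hm_eq, hb_eq]
              exact rel3 i h m a ha2
            have hres1 := resolve m (updAt m i h (a-1) (1-a)) (-(qF^2))
              (qPoly0_neg_pow 2 (by norm_num))
              (bruhat_step i h m (a-1) (1-a) (by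
                rw [← ha_def, ← hb_def, hb_eq, show (1-a) = -(a-1) by ring,
                  epsP_neg, epsP_neg]
                abel) (by rw [← ha_def]; exact leP_eps (by omega)))
              (IH _ (by
                have := f_step m i h (a-1) (1-a)
                  (by rw [← ha_def, ← hb_def]; omega)
                  (by intro c; rw [← ha_def, ← hb_def]; omega)
                  (by intro c; rw [← ha_def, ← hb_def]; omega)
                omega))
            have hres2 := resolve m (updAt m i h (1-a) (a-1)) (-(qF^2))
              (qPoly0_neg_pow 2 (by norm_num))
              (bruhat_step i h m (1-a) (a-1) (by
                rw [← ha_def, ← hb_def, hb_eq, show (1-a) = -(a-1) by ring,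
                  epsP_neg, epsP_neg]
                abel) (by rw [← ha_def]; exact leP_eps (by omega)))
              (IH _ (by
                have := f_step m i h (1-a) (a-1)
                  (by rw [← ha_def, ← hb_def]; omega)
                  (by intro c; rw [← ha_def, ← hb_def]; omega)
                  (by intro c; rw [← ha_def, ← hb_def]; omega)
                omega))
            have hres3 := resolve m (updAt m i h (-a) a) (-(qF^4))
              (qPoly0_neg_pow 4 (by norm_num))
              (bruhat_step i h m (-a) a (by
                rw [← ha_def, ← hb_def, hb_eq, epsP_neg]
                abel) (by rw [← ha_def]; exact leP_eps (by omega)))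
              (IH _ (by
                have := f_step m i h (-a) a
                  (by rw [← ha_def, ← hb_def]; omega)
                  (by intro c; rw [← ha_def, ← hb_def]; omega)
                  (by intro c; rw [← ha_def, ← hb_def]; omega)
                omega))
            obtain ⟨c₁, hc11, hc12, hc13⟩ := hres1
            obtain ⟨c₂, hc21, hc22, hc23⟩ := hres2
            obtain ⟨c₃, hc31, hc32, hc33⟩ := hres3
            refine ⟨c₁ + c₂ + c₃, ?_, ?_, ?_, ?_⟩
            · intro μ hμ
              rcases Finset.mem_union.mp (Finsupp.support_add hμ) with hμ' | hμ'
              · rcases Finset.mem_union.mp (Finsupp.support_add hμ') with h2 | h2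
                · exact hc11 μ h2
                · exact hc21 μ h2
              · exact hc31 μ hμ'
            · intro μ
              simp only [Finsupp.add_apply]
              exact intPoly_add (intPoly_add (qPoly0_intPoly (hc12 μ))
                (qPoly0_intPoly (hc22 μ))) (qPoly0_intPoly (hc32 μ))
            · intro μ
              left
              simp only [Finsupp.add_apply]
              exact qPoly0_add (qPoly0_add (hc12 μ) (hc22 μ)) (hc32 μ)
            · rw [sumFb_add, sumFb_add, ← hc13, ← hc23, ← hc33]
              exact hrel
          · -- case S4 : a = 1
            have ha1 : a = 1 := by omega
            have hrel : piQ n (Nb m)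
                = (-qF) • piQ n (Nb (updAt m i h 0 0))
                  + (-(qF^4)) • piQ n (Nb (updAt m i h (-1) 1)) := by
              conv_lhs => rw [hm_eq, hb_eq, ha1]
              exact rel4 i h m
            have hres1 := resolve m (updAt m i h 0 0) (-qF)
              (by simpa using qPoly0_neg_pow 1 (by norm_num))
              (bruhat_step i h m 0 0 (by
                rw [← ha_def, ← hb_def, hb_eq, ha1, epsP_neg, epsP_zero]
                abel) (by rw [← ha_def]; exact leP_eps (by omega)))
              (IH _ (by
                have := f_step m i h 0 0
                  (by rw [← ha_def, ← hb_def]; omega)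
                  (by intro c; rw [← ha_def, ← hb_def]; omega)
                  (by intro c; rw [← ha_def, ← hb_def]; omega)
                omega))
            have hres2 := resolve m (updAt m i h (-1) 1) (-(qF^4))
              (qPoly0_neg_pow 4 (by norm_num))
              (bruhat_step i h m (-1) 1 (by
                rw [← ha_def, ← hb_def, hb_eq, ha1, epsP_neg]
                abel) (by rw [← ha_def]; exact leP_eps (by omega)))
              (IH _ (by
                have := f_step m i h (-1) 1
                  (by rw [← ha_def, ← hb_def]; omega)
                  (by intro c; rw [← ha_def, ← hb_def]; omega)
                  (by intro c; rw [← ha_def, ← hb_def]; omega)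
                omega))
            obtain ⟨c₁, hc11, hc12, hc13⟩ := hres1
            obtain ⟨c₂, hc21, hc22, hc23⟩ := hres2
            refine ⟨c₁ + c₂, ?_, ?_, ?_, ?_⟩
            · intro μ hμ
              rcases Finset.mem_union.mp (Finsupp.support_add hμ) with hμ' | hμ'
              · exact hc11 μ hμ'
              · exact hc21 μ hμ'
            · intro μ
              simp only [Finsupp.add_apply]
              exact intPoly_add (qPoly0_intPoly (hc12 μ)) (qPoly0_intPoly (hc22 μ))
            · intro μ
              left
              simp only [Finsupp.add_apply]
              exact qPoly0_add (hc12 μ) (hc22 μ)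
            · rw [sumFb_add, ← hc13, ← hc23]
              exact hrel
        · -- case S2
          have hrel : piQ n (Nb m)
              = (-(qF^2)) • piQ n (Nb (updAt m i h b a)) := by
            conv_lhs => rw [hm_eq]
            exact rel2 i h m a b hab_lt hab0
          have hres1 := resolve m (updAt m i h b a) (-(qF^2))
            (qPoly0_neg_pow 2 (by norm_num))
            (bruhat_step i h m b a (by rw [← ha_def, ← hb_def]; abel)
              (by rw [← ha_def]; exact leP_eps (le_of_lt hab_lt)))
            (IH _ (by
              have := f_step m i h b a
                (by rw [← ha_def, ← hb_def]; omega)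
                (by intro c; rw [← ha_def, ← hb_def]; omega)
                (by intro c; rw [← ha_def, ← hb_def]; omega)
              omega))
          obtain ⟨c₁, hc11, hc12, hc13⟩ := hres1
          refine ⟨c₁, ?_, ?_, ?_, ?_⟩
          · exact hc11
          · intro μ; exact qPoly0_intPoly (hc12 μ)
          · intro μ; left; exact hc12 μ
          · rw [← hc13]; exact hrel
      · -- equal and nonzero: S1
        have heq : a = b := by
          rcases hbad with h1 | h2
          · omega
          · exact h2.1
        have hne : a ≠ 0 := by
          rcases hbad with h1 | h2
          · omega
          · exact h2.2
        refine ⟨0, ?_, ?_, ?_, ?_⟩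
        · intro μ hμ; simp at hμ
        · intro μ; simpa using intPoly_zero
        · intro μ; left; simpa using qPoly0_zero
        · rw [Finsupp.sum_zero_index]
          conv_lhs => rw [hm_eq, ← heq]
          exact rel1 i h m a hne

lemma main (m : Fin n → ℤ) : Concl n m := main_ind (fm m + 1) m (by omega)
end


/-- for `λ ∈ ℤⁿ₊`, `π(N_{w_0λ}) = F_λ`; for `λ ∉ ℤⁿ₊`,
`π(N_{w_0λ})` is a `q·ℤ[q]`-linear combination of `F_μ` with `μ ∈ ℤⁿ₊`,
`μ ≽ λ`. -/
theorem stmt8 (n : ℕ) (l : Fin n → ℤ) :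
    (ZPlus l → piQ n (Nb fun t => l (Fin.rev t)) = Fb l) ∧
    (¬ ZPlus l → ∃ c : (Fin n → ℤ) →₀ Fq,
      (∀ μ ∈ c.support, ZPlus μ ∧ bruhatLE l μ ∧ qPoly0 (c μ)) ∧
      piQ n (Nb fun t => l (Fin.rev t)) = c.sum fun μ d => d • Fb μ) := by
  constructor
  · intro _; rfl
  · intro hns
    obtain ⟨c, h1, _, h3, h4⟩ := main (m := fun t => l (Fin.rev t))
    have hcomp : ((fun t => l (Fin.rev t)) ∘ Fin.rev) = l := by
      funext t; simp [Function.comp, Fin.rev_rev]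
    rw [hcomp] at h1 h3
    refine ⟨c, ?_, h4⟩
    intro μ hμ
    obtain ⟨hz, hb⟩ := h1 μ hμ
    refine ⟨hz, hb, ?_⟩
    rcases h3 μ with hq | hzp
    · exact hq
    · exact absurd hzp hns

end
end

section
/- Let n ≥ 1, λ ∈ ℤⁿ₊ and i ≥ 0. Let λ^rev := (λ_n, λ_{n−1}, …, λ_1). Then ε′_i(λ^rev) + φ′_i(λ^rev) ≤ 2. (In other words, all i-strings in the crystal structure on ℤⁿ₊ have length at most 2.) -/
/-- The contribution of an entry `x` to the `i`-signature, written as a word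
in the two letters `+` (`true`) and `−` (`false`); the symbol `0` contributes
the empty word. -/
def sigList (i : ℕ) (x : ℤ) : List Bool :=
  if i = 0 then
    if x = -1 then [true, true]
    else if x = 0 then [false, true]
    else if x = 1 then [false, false]
    else []
  else
    if x = (i : ℤ) ∨ x = -(i : ℤ) - 1 then [true]
    else if x = (i : ℤ) + 1 ∨ x = -(i : ℤ) then [false]
    else []

/-- Reduction of a `±` word: process the letters from left to right, each `−`
cancelling the most recent uncancelled `+` (if any); the state `(a, b)` records
the number of uncancelled `−`'s and `+`'s.  This implements the repeated
cancellation of a `+` immediately followed by a `−`, and the final state gives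
`(ε′, φ′)`. -/
def redCount (w : List Bool) : ℕ × ℕ :=
  w.foldl (fun ab x =>
    if x then (ab.1, ab.2 + 1)
    else if ab.2 = 0 then (ab.1 + 1, 0) else (ab.1, ab.2 - 1)) (0, 0)

/-- The `i`-signature of `λ` as a `±` word, read from `r = 1` to `r = n`. -/
def sigWord {n : ℕ} (i : ℕ) (l : Fin n → ℤ) : List Bool :=
  (List.ofFn fun r : Fin n => sigList i (l r)).flatten

/-- `ε′_i(λ)`: the number of `−`'s in the reduced `i`-signature. -/
def epsPrime {n : ℕ} (i : ℕ) (l : Fin n → ℤ) : ℕ := (redCount (sigWord i l)).1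

/-- `φ′_i(λ)`: the number of `+`'s in the reduced `i`-signature. -/
def phiPrime {n : ℕ} (i : ℕ) (l : Fin n → ℤ) : ℕ := (redCount (sigWord i l)).2


/-- single-letter step of the reduction automaton -/
def stp (ab : ℕ × ℕ) (x : Bool) : ℕ × ℕ :=
  if x then (ab.1, ab.2 + 1)
  else if ab.2 = 0 then (ab.1 + 1, 0) else (ab.1, ab.2 - 1)

/-- step on a whole entry -/
def Gstep (i : ℕ) (s : ℕ × ℕ) (x : ℤ) : ℕ × ℕ := (sigList i x).foldl stp s

/-- allowed states when all remaining values are `≥ v` -/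
def Allowed (i : ℕ) (v : ℤ) (s : ℕ × ℕ) : Prop :=
  s = (0, 0) ∨
  if i = 0 then
    ((s = (0, 2) ∨ s = (1, 1)) ∧ 0 ≤ v) ∨ (s = (2, 0) ∧ 2 ≤ v)
  else
    (s = (0, 1) ∧ -(i : ℤ) ≤ v) ∨ (s = (1, 0) ∧ -(i : ℤ) + 1 ≤ v) ∨
    ((s = (0, 2) ∨ s = (1, 1)) ∧ (i : ℤ) + 1 ≤ v) ∨ (s = (2, 0) ∧ (i : ℤ) + 2 ≤ v)

lemma allowed_sum {i : ℕ} {v : ℤ} {s : ℕ × ℕ} (h : Allowed i v s) : s.1 + s.2 ≤ 2 := by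
  unfold Allowed at h
  split_ifs at h
  · rcases h with rfl | ⟨rfl | rfl, -⟩ | ⟨rfl, -⟩ <;> simp
  · rcases h with rfl | ⟨rfl, -⟩ | ⟨rfl, -⟩ | ⟨rfl | rfl, -⟩ | ⟨rfl, -⟩ <;> simp

def bnd (x : ℤ) : ℤ := if x = 0 then 0 else x + 1

lemma step_allowed {i : ℕ} {v x : ℤ} {s : ℕ × ℕ} (h : Allowed i v s) (hvx : v ≤ x) :
    Allowed i (bnd x) (Gstep i s x) := by
  unfold Allowed Gstep sigList bnd at *
  rcases Nat.eq_zero_or_pos i with hi | hi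
  · subst hi
    simp only [if_pos rfl] at h ⊢
    rcases h with h | ⟨h | h, hb⟩ | ⟨h, hb⟩ <;> subst h <;>
      split_ifs with h1 h2 h3 h4 <;> simp [stp] <;> omega
  · have hi' : i ≠ 0 := hi.ne'
    simp only [if_neg hi'] at h ⊢
    have hipos : (1:ℤ) ≤ (i:ℤ) := by exact_mod_cast hi
    rcases h with h | ⟨h, hb⟩ | ⟨h, hb⟩ | ⟨h | h, hb⟩ | ⟨h, hb⟩ <;> subst h <;>
      split_ifs with h1 h2 h3 <;> simp [stp] <;> omega

def ZRel (x y : ℤ) : Prop := x ≤ y ∧ (x = y → x = 0)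

lemma main_fold {i : ℕ} : ∀ L : List ℤ, L.Pairwise ZRel →
    ∀ s v, (∀ x ∈ L, v ≤ x) → Allowed i v s →
    ∃ v', Allowed i v' (L.foldl (Gstep i) s) := by
  intro L
  induction L with
  | nil => exact fun _ s v _ h => ⟨v, h⟩
  | cons x L ih =>
    intro hp s v hb hA
    rcases List.pairwise_cons.mp hp with ⟨hx, hp'⟩
    refine ih hp' (Gstep i s x) (bnd x) ?_ (step_allowed hA (hb x (by simp)))
    intro y hy
    rcases hx y hy with ⟨hle, heq⟩
    unfold bnd
    split_ifs with h0 <;> omega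

lemma lower_bound (L : List ℤ) : ∃ v, ∀ x ∈ L, v ≤ x := by
  induction L with
  | nil => exact ⟨0, by simp⟩
  | cons x L ih =>
    rcases ih with ⟨v, hv⟩
    exact ⟨min v x, by
      intro y hy
      rcases List.mem_cons.mp hy with h | h
      · omega
      · exact le_trans (min_le_left _ _) (hv y h)⟩

/-- for `λ ∈ ℤⁿ₊` and any `i ≥ 0`,
`ε′_i(λ^rev) + φ′_i(λ^rev) ≤ 2`: all `i`-strings in the crystal have length at
most 2. -/
theorem stmt9 (n : ℕ) (hn : 1 ≤ n) (l : Fin n → ℤ) (hl : ZPlus l) (i : ℕ) :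
    epsPrime i (fun r : Fin n => l (Fin.rev r)) +
      phiPrime i (fun r : Fin n => l (Fin.rev r)) ≤ 2 := by
  set m : Fin n → ℤ := fun r : Fin n => l (Fin.rev r) with hm
  have key : redCount ((List.ofFn fun r : Fin n => sigList i (m r)).flatten)
      = (List.ofFn m).foldl (Gstep i) (0, 0) := by
    have h1 : (List.ofFn fun r : Fin n => sigList i (m r))
        = (List.ofFn m).map (sigList i) := (List.map_ofFn (f := m) (g := sigList i)).symm
    rw [h1]
    show ((List.ofFn m).map (sigList i)).flatten.foldl stp (0,0) = _
    rw [List.foldl_flatten, List.foldl_map]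
    rfl
  have hpw : (List.ofFn m).Pairwise ZRel := by
    rw [List.pairwise_ofFn]
    intro r s hrs
    have hlt : Fin.rev s < Fin.rev r := Fin.rev_lt_rev.mpr hrs
    refine ⟨hl.1 hlt.le, fun heq => ?_⟩
    exact heq.trans (hl.2 (Fin.rev s) (Fin.rev r) hlt heq.symm)
  obtain ⟨v, hv⟩ := lower_bound (List.ofFn m)
  obtain ⟨v', hA⟩ := main_fold (List.ofFn m) hpw (0,0) v hv (Or.inl rfl)
  have hsum := allowed_sum hA
  rw [← key] at hsum
  exact hsum
end

section
/- Let n ≥ 1 and let e, f : ℕ → ℕ be arbitrary functions. Then the set {λ ∈ ℤⁿ : ε′_i(λ) = e(i) and φ′_i(λ) = f(i) for all i ≥ 0} is finite. -/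
private def rcStep : ℕ × ℕ → Bool → ℕ × ℕ := fun ab x =>
  if x then (ab.1, ab.2 + 1)
  else if ab.2 = 0 then (ab.1 + 1, 0) else (ab.1, ab.2 - 1)

lemma redCount_eq (w : List Bool) : redCount w = w.foldl rcStep (0, 0) := rfl

lemma redCount_snoc (u : List Bool) (x : Bool) :
    redCount (u ++ [x]) = rcStep (redCount u) x := by
  rw [redCount_eq, List.foldl_append, ← redCount_eq]; rfl

lemma redCount_fst_le (u v : List Bool) :
    (redCount u).1 ≤ (redCount (u ++ v)).1 := by
  induction v using List.reverseRecOn with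
  | nil => simp
  | append_singleton v x ih =>
      rw [← List.append_assoc, redCount_snoc]
      refine le_trans ih ?_
      unfold rcStep
      split_ifs <;> simp

lemma redCount_inv (u : List Bool) :
    (redCount u).2 + u.count false = (redCount u).1 + u.count true := by
  induction u using List.reverseRecOn with
  | nil => rfl
  | append_singleton u x ih =>
      rw [redCount_snoc]
      cases x <;> unfold rcStep <;> simp [List.count_append] <;> first
      | omega
      | (split_ifs <;> omega)

lemma exists_true_of_false_mem (u v : List Bool)
    (h : (redCount (u ++ false :: v)).1 = 0) : 0 < u.count true := by
  have h1 : (redCount (u ++ [false])).1 = 0 := by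
    have h2 := redCount_fst_le (u ++ [false]) v
    rw [List.append_assoc] at h2
    simp only [List.singleton_append] at h2
    omega
  have h0 : (redCount u).1 = 0 := by
    have := redCount_fst_le u [false]
    omega
  rw [redCount_snoc] at h1
  unfold rcStep at h1
  simp only [Bool.false_eq_true, if_false] at h1
  have hb : (redCount u).2 ≠ 0 := by
    intro hb; rw [if_pos hb] at h1; simp at h1
  have := redCount_inv u
  omega


private def wordOf (i : ℕ) (L : List ℤ) : List Bool := (L.map (sigList i)).flatten

lemma sigWord_eq_wordOf {n : ℕ} (i : ℕ) (l : Fin n → ℤ) :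
    sigWord i l = wordOf i (List.ofFn l) := by
  simp [sigWord, wordOf, List.map_ofFn]; rfl

lemma wordOf_append (i : ℕ) (L₁ L₂ : List ℤ) :
    wordOf i (L₁ ++ L₂) = wordOf i L₁ ++ wordOf i L₂ := by
  simp [wordOf]

lemma wordOf_cons (i : ℕ) (x : ℤ) (L : List ℤ) :
    wordOf i (x :: L) = sigList i x ++ wordOf i L := by
  simp [wordOf]

lemma sigList_eq_false {i : ℕ} (hi : 1 ≤ i) {x : ℤ}
    (hx : x = (i : ℤ) + 1 ∨ x = -(i : ℤ)) : sigList i x = [false] := by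
  have h0 : i ≠ 0 := by omega
  have hi' : (1 : ℤ) ≤ (i : ℤ) := by exact_mod_cast hi
  have h1 : ¬(x = (i : ℤ) ∨ x = -(i : ℤ) - 1) := by omega
  rw [sigList, if_neg h0, if_neg h1, if_pos hx]

lemma true_mem_sigList {i : ℕ} (hi : 1 ≤ i) {x : ℤ}
    (hx : true ∈ sigList i x) : x = (i : ℤ) ∨ x = -(i : ℤ) - 1 := by
  have h0 : i ≠ 0 := by omega
  rw [sigList, if_neg h0] at hx
  split_ifs at hx with h1 h2
  · exact h1
  · simp at hx
  · simp at hx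

lemma F1fin {n i : ℕ} (hi : 1 ≤ i) (l : Fin n → ℤ) (h : epsPrime i l = 0)
    (r : Fin n) (hr : l r = (i : ℤ) + 1 ∨ l r = -(i : ℤ)) :
    ∃ q : Fin n, q < r ∧ (l q = (i : ℤ) ∨ l q = -(i : ℤ) - 1) := by
  set L := List.ofFn l with hLdef
  have hlen : L.length = n := by simp [hLdef]
  have hrn : (r : ℕ) < L.length := by rw [hlen]; exact r.isLt
  have hsplit : L = L.take r ++ l r :: L.drop (r + 1) := by
    conv_lhs => rw [← List.take_append_drop (r : ℕ) L]
    congr 1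
    rw [← List.getElem_cons_drop hrn]
    congr 1
    simp [hLdef]
  have hword : sigWord i l
      = wordOf i (L.take r) ++ (false :: wordOf i (L.drop (r + 1))) := by
    rw [sigWord_eq_wordOf, ← hLdef]
    conv_lhs => rw [hsplit]
    rw [wordOf_append, wordOf_cons, sigList_eq_false hi hr]
    simp
  have h0 : 0 < (wordOf i (L.take r)).count true := by
    apply exists_true_of_false_mem _ (wordOf i (L.drop (r + 1)))
    rw [← hword]
    exact h
  have hmem : true ∈ wordOf i (L.take (r : ℕ)) := List.count_pos_iff.mp h0
  rw [wordOf, List.mem_flatten] at hmem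
  obtain ⟨s, hs, hts⟩ := hmem
  rw [List.mem_map] at hs
  obtain ⟨x, hxmem, rfl⟩ := hs
  obtain ⟨j, hj, hxj⟩ := List.mem_iff_getElem.mp hxmem
  have hjr : j < (r : ℕ) := by
    have := hj
    simp only [List.length_take, hlen] at this
    omega
  have hjn : j < n := lt_trans hjr r.isLt
  have hxval : x = l ⟨j, hjn⟩ := by
    rw [← hxj]
    simp [hLdef, List.getElem_take]
  refine ⟨⟨j, hjn⟩, ?_, ?_⟩
  · exact hjr
  · exact true_mem_sigList hi (hxval ▸ hts)

lemma mainBound {n : ℕ} (hn : 1 ≤ n) (k : ℕ) (hk : 1 ≤ k) (l : Fin n → ℤ)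
    (h : ∀ i, k ≤ i → epsPrime i l = 0) : ∀ r, (l r).natAbs ≤ n + k := by
  classical
  have hne : (Finset.univ : Finset (Fin n)).Nonempty := ⟨⟨0, hn⟩, Finset.mem_univ _⟩
  set m := Finset.univ.sup (fun r : Fin n => (l r).natAbs) with hm
  have hle : ∀ r, (l r).natAbs ≤ m := fun r =>
    Finset.le_sup (f := fun r : Fin n => (l r).natAbs) (Finset.mem_univ r)
  suffices hms : m ≤ n + k by intro r; exact (hle r).trans hms
  by_cases hmk : m < k
  · omega
  push_neg at hmk
  -- existence of a (first) position with a given positive value, plus the key property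
  have H : ∀ d : ℕ, k + d ≤ m → ∃ p : Fin n, l p = ((m - d : ℕ) : ℤ) ∧
      ∀ q : Fin n, q < p → (l q).natAbs < m - d := by
    intro d
    induction d with
    | zero =>
      intro _
      simp only [Nat.sub_zero]
      have hm1 : 1 ≤ m := le_trans hk hmk
      have hex : ∃ p : Fin n, l p = (m : ℤ) := by
        obtain ⟨r0, -, hr0⟩ := Finset.exists_mem_eq_sup Finset.univ hne
          (fun r : Fin n => (l r).natAbs)
        rcases Int.natAbs_eq (l r0) with he | he
        · exact ⟨r0, by rw [he, ← hr0]⟩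
        · have hneg : l r0 = -(m : ℤ) := by rw [he, ← hr0]
          obtain ⟨q, -, hql⟩ := F1fin hm1 l (h m hmk) r0 (Or.inr hneg)
          rcases hql with h1 | h1
          · exact ⟨q, h1⟩
          · exfalso; have h2 := hle q; omega
      set F := Finset.univ.filter (fun p : Fin n => l p = (m : ℤ)) with hF
      have hFne : F.Nonempty := by
        obtain ⟨p, hp⟩ := hex
        exact ⟨p, Finset.mem_filter.mpr ⟨Finset.mem_univ _, hp⟩⟩
      set p := F.min' hFne with hpdef
      have hp : l p = (m : ℤ) := (Finset.mem_filter.mp (F.min'_mem hFne)).2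
      refine ⟨p, hp, ?_⟩
      intro q hq
      by_contra hcon
      have hq1 : (l q).natAbs = m := by have := hle q; omega
      have hqm : l q = (m : ℤ) ∨ l q = -(m : ℤ) := by
        rcases Int.natAbs_eq (l q) with he | he <;> rw [he, hq1]
        · left; rfl
        · right; rfl
      rcases hqm with h1 | h1
      · have : p ≤ q := F.min'_le q (Finset.mem_filter.mpr ⟨Finset.mem_univ _, h1⟩)
        exact absurd hq (not_lt.mpr this)
      · obtain ⟨q', hq', hql⟩ := F1fin hm1 l (h m hmk) q (Or.inr h1)
        rcases hql with h2 | h2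
        · have : p ≤ q' := F.min'_le q' (Finset.mem_filter.mpr ⟨Finset.mem_univ _, h2⟩)
          have : p < p := lt_of_le_of_lt this (lt_trans hq' hq)
          exact absurd this (lt_irrefl p)
        · have h3 := hle q'; omega
    | succ d ih =>
      intro hd
      have hd' : k + d ≤ m := by omega
      obtain ⟨p1, hp1, hbefore⟩ := ih hd'
      set j := m - (d + 1) with hj
      have hjk : k ≤ j := by omega
      have hj1 : 1 ≤ j := le_trans hk hjk
      have hmd : m - d = j + 1 := by omega
      have hp1' : l p1 = (j : ℤ) + 1 := by
        rw [hp1, hmd]; push_cast; ring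
      obtain ⟨q, hqlt, hql⟩ := F1fin hj1 l (h j hjk) p1 (Or.inl hp1')
      have hqj : l q = (j : ℤ) := by
        rcases hql with h1 | h1
        · exact h1
        · exfalso
          have h2 := hbefore q hqlt
          rw [hmd] at h2
          omega
      set F := Finset.univ.filter (fun p : Fin n => l p = (j : ℤ)) with hF
      have hFne : F.Nonempty := ⟨q, Finset.mem_filter.mpr ⟨Finset.mem_univ _, hqj⟩⟩
      set p := F.min' hFne with hpdef
      have hp : l p = (j : ℤ) := (Finset.mem_filter.mp (F.min'_mem hFne)).2
      have hpq : p ≤ q := F.min'_le q (Finset.mem_filter.mpr ⟨Finset.mem_univ _, hqj⟩)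
      have hpp1 : p < p1 := lt_of_le_of_lt hpq hqlt
      refine ⟨p, hp, ?_⟩
      intro q' hq'
      have hq'p1 : q' < p1 := lt_trans hq' hpp1
      have h2 : (l q').natAbs < j + 1 := by
        have := hbefore q' hq'p1; rw [hmd] at this; exact this
      by_contra hcon
      have hq1 : (l q').natAbs = j := by omega
      have hqm : l q' = (j : ℤ) ∨ l q' = -(j : ℤ) := by
        rcases Int.natAbs_eq (l q') with he | he <;> rw [he, hq1]
        · left; rfl
        · right; rfl
      rcases hqm with h1 | h1
      · have : p ≤ q' := F.min'_le q' (Finset.mem_filter.mpr ⟨Finset.mem_univ _, h1⟩)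
        exact absurd hq' (not_lt.mpr this)
      · obtain ⟨q'', hq'', hql2⟩ := F1fin hj1 l (h j hjk) q' (Or.inr h1)
        rcases hql2 with h2' | h2'
        · have : p ≤ q'' := F.min'_le q'' (Finset.mem_filter.mpr ⟨Finset.mem_univ _, h2'⟩)
          have : p < p := lt_of_le_of_lt this (lt_trans hq'' hq')
          exact absurd this (lt_irrefl p)
        · have h3 := hbefore q'' (lt_trans hq'' hq'p1)
          rw [hmd] at h3
          omega
  -- count the values k..m, all of which occur among the n entries
  have hsub : Finset.Icc (k : ℤ) (m : ℤ) ⊆ Finset.univ.image l := by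
    intro j hj
    rw [Finset.mem_Icc] at hj
    have hj0 : (0 : ℤ) ≤ j := le_trans (by exact_mod_cast Nat.zero_le k) hj.1
    have hjk : k ≤ j.toNat := by omega
    have hjm : j.toNat ≤ m := by omega
    obtain ⟨p, hp, -⟩ := H (m - j.toNat) (by omega)
    have hval : ((m - (m - j.toNat) : ℕ) : ℤ) = j := by
      have h1 : m - (m - j.toNat) = j.toNat := by omega
      rw [h1]; omega
    rw [hval] at hp
    exact Finset.mem_image.mpr ⟨p, Finset.mem_univ _, hp⟩
  have hcard := Finset.card_le_card hsub
  rw [Int.card_Icc] at hcard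
  have hcard2 : (Finset.univ.image l).card ≤ n := by
    calc (Finset.univ.image l).card ≤ (Finset.univ : Finset (Fin n)).card :=
          Finset.card_image_le
      _ = n := by simp
  omega

/-- given prescribed values `e i` of `ε′_i` and `f i` of `φ′_i`
for all `i ≥ 0`, only finitely many `λ ∈ ℤⁿ` realize them. -/
theorem stmt10 (n : ℕ) (hn : 1 ≤ n) (e f : ℕ → ℕ) :
    {l : Fin n → ℤ | ∀ i : ℕ, epsPrime i l = e i ∧ phiPrime i l = f i}.Finite := by
  classical
  set S := {l : Fin n → ℤ | ∀ i : ℕ, epsPrime i l = e i ∧ phiPrime i l = f i} with hSdef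
  rcases Set.eq_empty_or_nonempty S with hS | ⟨l0, hl0⟩
  · rw [hS]; exact Set.finite_empty
  · set B := Finset.univ.sup (fun r : Fin n => (l0 r).natAbs) with hB
    have hBle : ∀ r, (l0 r).natAbs ≤ B := fun r =>
      Finset.le_sup (f := fun r : Fin n => (l0 r).natAbs) (Finset.mem_univ r)
    have hl0' : ∀ i : ℕ, epsPrime i l0 = e i ∧ phiPrime i l0 = f i := hl0
    have hzero : ∀ i, B + 1 ≤ i → e i = 0 := by
      intro i hi
      rw [← (hl0' i).1]
      have hw : sigWord i l0 = [] := by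
        rw [sigWord]
        rw [List.flatten_eq_nil_iff]
        intro s hs
        rw [List.mem_ofFn] at hs
        obtain ⟨r, rfl⟩ := hs
        have hi0 : i ≠ 0 := by omega
        have hb := hBle r
        have hic : (B : ℤ) + 1 ≤ (i : ℤ) := by exact_mod_cast hi
        show sigList i (l0 r) = []
        rw [sigList, if_neg hi0, if_neg, if_neg]
        · omega
        · omega
      rw [epsPrime, hw]
      rfl
    have hbound : ∀ l ∈ S, ∀ r : Fin n, (l r).natAbs ≤ n + (B + 1) := by
      intro l hl
      refine mainBound hn (B + 1) (by omega) l ?_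
      intro i hi
      have hl' : ∀ i : ℕ, epsPrime i l = e i ∧ phiPrime i l = f i := hl
      rw [(hl' i).1]
      exact hzero i hi
    apply Set.Finite.subset
      (Set.Finite.pi (fun _ : Fin n => Set.finite_Icc (-((n : ℤ) + B + 1)) ((n : ℤ) + B + 1)))
    intro l hl
    simp only [Set.mem_pi, Set.mem_univ, forall_true_left, Set.mem_Icc]
    intro r
    have h1 := hbound l hl r
    constructor <;> omega
end
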